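/- Exponential convergence of the Sinkhorn iteration for general M ≥ 2: let (û^(i))_{i=1}^{M+1} be a dual-optimal tuple, and set E := max_{i≤M} λ(K^(i)) and e := max_{i≤M+1} d_H(u^(0,i), û^(i)). Then for every n ∈ ℕ and every i = 1,…,M+1: d_H(u^(n,i), û^(i)) ≤ E^n·e. -/

import Mathlib

open Matrix Finset Real

noncomputable section

/- Throughout, the number of composed transport plans is `M = N + 2` for `N : ℕ`, which
exactly captures the assumption `M ≥ 2`.  Vectors are indexed by `1, …, M + 1 = N + 3`
and matrices by `1, …, M = N + 2`. -/

/-- Componentwise (Frobenius) inner product `⟨X, Y⟩ = Σ_{j,k} X_{jk} Y_{jk}`. -/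
def frob {m n : ℕ} (X Y : Matrix (Fin m) (Fin n) ℝ) : ℝ := ∑ j, ∑ k, X j k * Y j k

/-- The entropy `H(P) = −Σ_{j,k} P_{jk} (log P_{jk} − 1)` (with `0·log 0 = 0`,
as is the case for `Real.log`). -/
def ent {m n : ℕ} (P : Matrix (Fin m) (Fin n) ℝ) : ℝ :=
  -∑ j, ∑ k, P j k * (Real.log (P j k) - 1)

/-- Feasibility of a tuple of transportation plans for the sequentially composed OT
problem with `M = N + 2`: the first marginal is `a`, the last is `b`, and consecutive
plans are consistent on the boundaries. -/
def FeasibleT (N : ℕ) (m : ℕ → ℕ)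
    (a : Fin (m 1) → ℝ) (b : Fin (m (N+3)) → ℝ)
    (P : ∀ i : ℕ, Matrix (Fin (m i)) (Fin (m (i+1))) ℝ) : Prop :=
  (P 1 *ᵥ fun _ => 1) = a ∧ ((P (N+2))ᵀ *ᵥ fun _ => 1) = b ∧
    ∀ i : ℕ, 1 ≤ i → i ≤ N + 1 → ((P i)ᵀ *ᵥ fun _ => 1) = (P (i+1) *ᵥ fun _ => 1)

/-- Entrywise nonnegativity of a tuple of matrices, for the relevant indices `1, …, N+2`. -/
def NonnegT (N : ℕ) (m : ℕ → ℕ)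
    (P : ∀ i : ℕ, Matrix (Fin (m i)) (Fin (m (i+1))) ℝ) : Prop :=
  ∀ i : ℕ, 1 ≤ i → i ≤ N + 2 → ∀ j k, 0 ≤ P i j k

/-- The regularized primal objective `Σ_{i=1}^{M} (⟨C⁽ⁱ⁾, P⁽ⁱ⁾⟩ − ε H(P⁽ⁱ⁾))`. -/
def primalVal (N : ℕ) (m : ℕ → ℕ)
    (C : ∀ i : ℕ, Matrix (Fin (m i)) (Fin (m (i+1))) ℝ) (ε : ℝ)
    (P : ∀ i : ℕ, Matrix (Fin (m i)) (Fin (m (i+1))) ℝ) : ℝ :=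
  ∑ i ∈ Finset.Icc 1 (N+2), (frob (C i) (P i) - ε * ent (P i))

/-- The dual function `L((f⁽ⁱ⁾)_{i=1}^{M+1})` of the regularized sequentially composed OT
problem with `M = N + 2`. -/
def dualGen (N : ℕ) (m : ℕ → ℕ)
    (C : ∀ i : ℕ, Matrix (Fin (m i)) (Fin (m (i+1))) ℝ)
    (a : Fin (m 1) → ℝ) (b : Fin (m (N+3)) → ℝ) (ε : ℝ)
    (f : ∀ i : ℕ, Fin (m i) → ℝ) : ℝ :=
  (∑ j, f 1 j * a j) + (∑ k, f (N+3) k * b k)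
    - ε * ((∑ j, ∑ k, Real.exp ((f (N+2) j + f (N+3) k - C (N+2) j k) / ε))
      + ∑ i ∈ Finset.Icc 1 (N+1), ∑ j, ∑ k, Real.exp ((f i j - f (i+1) k - C i j k) / ε))

/-- The Hilbert projective (pseudo)metric on the positive orthant. -/
def dH {m : ℕ} (u v : Fin m → ℝ) : ℝ :=
  Real.log ((⨆ i, u i / v i) * (⨆ j, v j / u j))

/-- Birkhoff's ratio `γ(A)`. -/
def birkhoffGamma {n m : ℕ} (A : Matrix (Fin n) (Fin m) ℝ) : ℝ :=
  ⨆ p : (Fin n × Fin n) × Fin m × Fin m,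
    A p.1.1 p.2.1 * A p.1.2 p.2.2 / (A p.1.2 p.2.1 * A p.1.1 p.2.2)

/-- Birkhoff's contraction coefficient `λ(A) = (√γ(A) − 1)/(√γ(A) + 1)`. -/
def birkhoffLambda {n m : ℕ} (A : Matrix (Fin n) (Fin m) ℝ) : ℝ :=
  (Real.sqrt (birkhoffGamma A) - 1) / (Real.sqrt (birkhoffGamma A) + 1)

section Helpers

lemma le_ciSup_fin (f : Fin mm → ℝ) (i : Fin mm) : f i ≤ ⨆ j, f j :=
  le_ciSup (Set.Finite.bddAbove (Set.finite_range f)) i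

lemma exists_eq_ciSup_fin [Nonempty (Fin mm)] (f : Fin mm → ℝ) : ∃ i, (⨆ j, f j) = f i := by
  obtain ⟨i, hi⟩ := Finite.exists_max f
  exact ⟨i, le_antisymm (ciSup_le hi) (le_ciSup_fin f i)⟩

lemma Spos (hmm : 0 < mm) {u v : Fin mm → ℝ} (hu : ∀ i, 0 < u i) (hv : ∀ i, 0 < v i) :
    0 < ⨆ i, u i / v i := by
  have i0 : Fin mm := ⟨0, hmm⟩
  exact lt_of_lt_of_le (div_pos (hu i0) (hv i0)) (le_ciSup_fin (fun i => u i / v i) i0)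

lemma dH_nonneg (hmm : 0 < mm) {u v : Fin mm → ℝ} (hu : ∀ i, 0 < u i) (hv : ∀ i, 0 < v i) :
    0 ≤ dH u v := by
  apply Real.log_nonneg
  have i0 : Fin mm := ⟨0, hmm⟩
  calc (1:ℝ) = (u i0 / v i0) * (v i0 / u i0) := by
        rw [div_mul_div_comm, mul_comm (v i0) (u i0), div_self (mul_pos (hu i0) (hv i0)).ne']
    _ ≤ (⨆ i, u i / v i) * (⨆ j, v j / u j) := by
        apply mul_le_mul (le_ciSup_fin (fun i => u i / v i) i0)
          (le_ciSup_fin (fun j => v j / u j) i0)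
          (le_of_lt (div_pos (hv i0) (hu i0)))
        exact le_of_lt (Spos hmm hu hv)

lemma dH_symm {u v : Fin mm → ℝ} : dH u v = dH v u := by
  rw [dH, dH, mul_comm]

lemma dH_congr {u v u' v' : Fin mm → ℝ}
    (h : ∀ i, u i / v i = u' i / v' i) : dH u v = dH u' v' := by
  have h2 : ∀ i, v i / u i = v' i / u' i := by
    intro i
    rw [show v i / u i = (u i / v i)⁻¹ from (inv_div _ _).symm,
      show v' i / u' i = (u' i / v' i)⁻¹ from (inv_div _ _).symm, h i]
  rw [dH, dH, iSup_congr h, iSup_congr h2]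

lemma dH_inv {u v : Fin mm → ℝ} (hu : ∀ i, 0 < u i) (hv : ∀ i, 0 < v i) :
    dH (fun i => (u i)⁻¹) (fun i => (v i)⁻¹) = dH u v := by
  have : dH (fun i => (u i)⁻¹) (fun i => (v i)⁻¹) = dH v u := by
    apply dH_congr
    intro i
    field_simp [(hu i).ne', (hv i).ne']
  rw [this, dH_symm]

lemma dH_div_left {c u v : Fin mm → ℝ} (hc : ∀ i, 0 < c i) (hu : ∀ i, 0 < u i)
    (hv : ∀ i, 0 < v i) :
    dH (fun i => c i / u i) (fun i => c i / v i) = dH u v := by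
  have : dH (fun i => c i / u i) (fun i => c i / v i) = dH v u := by
    apply dH_congr
    intro i
    field_simp [(hc i).ne', (hu i).ne', (hv i).ne']
  rw [this, dH_symm]

lemma dH_sqrt_le (hmm : 0 < mm) {P P' Q Q' : Fin mm → ℝ}
    (hP : ∀ i, 0 < P i) (hP' : ∀ i, 0 < P' i) (hQ : ∀ i, 0 < Q i) (hQ' : ∀ i, 0 < Q' i) :
    dH (fun j => Real.sqrt (P j / Q j)) (fun j => Real.sqrt (P' j / Q' j))
      ≤ (dH P P' + dH Q Q') / 2 := by
  have key : ∀ (X X' Y Y' : Fin mm → ℝ), (∀ i, 0 < X i) → (∀ i, 0 < X' i) →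
      (∀ i, 0 < Y i) → (∀ i, 0 < Y' i) →
      (⨆ j, Real.sqrt (X j / Y j) / Real.sqrt (X' j / Y' j))
        ≤ Real.sqrt ((⨆ i, X i / X' i) * (⨆ i, Y' i / Y i)) := by
    intro X X' Y Y' hX hX' hY hY'
    haveI : Nonempty (Fin mm) := ⟨⟨0, hmm⟩⟩
    apply ciSup_le
    intro j
    rw [← Real.sqrt_div (le_of_lt (div_pos (hX j) (hY j)))]
    apply Real.sqrt_le_sqrt
    rw [show X j / Y j / (X' j / Y' j) = (X j / X' j) * (Y' j / Y j) by
      field_simp [(hX' j).ne', (hY j).ne', (hY' j).ne']]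
    apply mul_le_mul (le_ciSup_fin (fun i => X i / X' i) j)
      (le_ciSup_fin (fun i => Y' i / Y i) j)
      (le_of_lt (div_pos (hY' j) (hY j)))
    exact le_of_lt (Spos hmm hX hX')
  have h1 := key P P' Q Q' hP hP' hQ hQ'
  have h2 := key P' P Q' Q hP' hP hQ' hQ
  have hs1pos : 0 < ⨆ j, Real.sqrt (P j / Q j) / Real.sqrt (P' j / Q' j) :=
    Spos hmm (fun i => Real.sqrt_pos.mpr (div_pos (hP i) (hQ i)))
      (fun i => Real.sqrt_pos.mpr (div_pos (hP' i) (hQ' i)))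
  have hs2pos : 0 < ⨆ j, Real.sqrt (P' j / Q' j) / Real.sqrt (P j / Q j) :=
    Spos hmm (fun i => Real.sqrt_pos.mpr (div_pos (hP' i) (hQ' i)))
      (fun i => Real.sqrt_pos.mpr (div_pos (hP i) (hQ i)))
  have hSP : 0 < ⨆ i, P i / P' i := Spos hmm hP hP'
  have hSP' : 0 < ⨆ i, P' i / P i := Spos hmm hP' hP
  have hSQ : 0 < ⨆ i, Q i / Q' i := Spos hmm hQ hQ'
  have hSQ' : 0 < ⨆ i, Q' i / Q i := Spos hmm hQ' hQ
  rw [dH]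
  calc Real.log ((⨆ j, Real.sqrt (P j / Q j) / Real.sqrt (P' j / Q' j)) *
        (⨆ j, Real.sqrt (P' j / Q' j) / Real.sqrt (P j / Q j)))
      ≤ Real.log (Real.sqrt ((⨆ i, P i / P' i) * (⨆ i, Q' i / Q i)) *
        Real.sqrt ((⨆ i, P' i / P i) * (⨆ i, Q i / Q' i))) := by
        apply Real.log_le_log (by positivity)
        exact mul_le_mul h1 h2 (le_of_lt hs2pos) (Real.sqrt_nonneg _)
    _ = (dH P P' + dH Q Q') / 2 := by
        rw [← Real.sqrt_mul (by positivity)]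
        rw [Real.log_sqrt (by positivity)]
        rw [show (⨆ i, P i / P' i) * (⨆ i, Q' i / Q i) * ((⨆ i, P' i / P i) * (⨆ i, Q i / Q' i))
          = ((⨆ i, P i / P' i) * (⨆ i, P' i / P i)) * ((⨆ i, Q i / Q' i) * (⨆ i, Q' i / Q i))
          by ring]
        rw [Real.log_mul (by positivity) (by positivity)]
        rw [dH, dH]



lemma log_ratio_le {c x : ℝ} (hc : 1 ≤ c) (hx : 1 ≤ x) :
    (c+1) * (Real.log (c*x+1) - Real.log (x+c)) ≤ (c-1) * Real.log x := by
  set F : ℝ → ℝ := fun y => (c-1)*Real.log y - (c+1)*Real.log (c*y+1) + (c+1)*Real.log (y+c)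
    with hF
  have hc0 : 0 < c := lt_of_lt_of_le one_pos hc
  have hD : ∀ y ∈ Set.Ici (1:ℝ), HasDerivAt F
      ((c-1)*y⁻¹ - (c+1)*((c*y+1)⁻¹*c) + (c+1)*((y+c)⁻¹*1)) y := by
    intro y hy
    have hy0 : 0 < y := lt_of_lt_of_le one_pos hy
    have h1 : HasDerivAt (fun y : ℝ => (c-1)*Real.log y) ((c-1)*y⁻¹) y :=
      (Real.hasDerivAt_log hy0.ne').const_mul _
    have h2 : HasDerivAt (fun y : ℝ => c*y+1) c y := by
      simpa using ((hasDerivAt_id y).const_mul c).add_const 1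
    have h2' : HasDerivAt (fun y : ℝ => (c+1)*Real.log (c*y+1)) ((c+1)*((c*y+1)⁻¹*c)) y := by
      have := (Real.hasDerivAt_log (by positivity : (0:ℝ) < c*y+1).ne').comp y h2
      exact this.const_mul _
    have h3 : HasDerivAt (fun y : ℝ => y+c) 1 y := by
      simpa using (hasDerivAt_id y).add_const c
    have h3' : HasDerivAt (fun y : ℝ => (c+1)*Real.log (y+c)) ((c+1)*((y+c)⁻¹*1)) y := by
      have := (Real.hasDerivAt_log (by positivity : (0:ℝ) < y+c).ne').comp y h3
      exact this.const_mul _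
    exact (h1.sub h2').add h3'
  have hdiff : DifferentiableOn ℝ F (Set.Ici 1) :=
    fun y hy => (hD y hy).differentiableAt.differentiableWithinAt
  have hmono : MonotoneOn F (Set.Ici 1) := by
    apply monotoneOn_of_deriv_nonneg (convex_Ici 1) hdiff.continuousOn
      (hdiff.mono interior_subset)
    intro y hy
    rw [interior_Ici] at hy
    have hy1 : (1:ℝ) < y := hy
    have hy0 : 0 < y := lt_trans one_pos hy1
    rw [(hD y (le_of_lt hy1)).deriv]
    have key : (c-1)*y⁻¹ - (c+1)*((c*y+1)⁻¹*c) + (c+1)*((y+c)⁻¹*1)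
        = c*(c-1)*(y-1)^2 / (y*((c*y+1)*(y+c))) := by
      field_simp
      ring
    rw [key]
    have h1 : 0 ≤ c*(c-1)*(y-1)^2 := by
      apply mul_nonneg (mul_nonneg (le_of_lt hc0) (by linarith)) (sq_nonneg _)
    positivity
  have hle : F 1 ≤ F x := hmono (Set.self_mem_Ici) hx hx
  have hF1 : F 1 = 0 := by
    simp only [hF, Real.log_one, mul_one, mul_zero]
    rw [add_comm (1:ℝ) c]
    ring
  have := hF1 ▸ hle
  simp only [hF] at this
  linarith
set_option maxHeartbeats 1000000 in

lemma core_poly {a b c p q p' q' : ℝ} (ha : 0 < a) (hab : a ≤ b) (hc : 1 ≤ c)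
    (hp : 0 ≤ p) (hq : 0 ≤ q) (hp' : 0 ≤ p') (hq' : 0 ≤ q')
    (h1 : p*q' ≤ c^2*(q*p')) (h2 : q*p' ≤ c^2*(p*q')) :
    (b^2*p + a^2*q)*(p'+q')*(b+c*a)^2 ≤ (p+q)*(b^2*p'+a^2*q')*(c*b+a)^2 := by
  have hb : 0 < b := lt_of_lt_of_le ha hab
  have hc0 : 0 < c := lt_of_lt_of_le one_pos hc
  have hc2 : 0 ≤ c^2 - 1 := by nlinarith
  set X := Real.sqrt (p*q') with hX
  set Y := Real.sqrt (q*p') with hY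
  set U := Real.sqrt (p*p') with hU
  set V := Real.sqrt (q*q') with hV
  have hX2 : X^2 = p*q' := Real.sq_sqrt (mul_nonneg hp hq')
  have hY2 : Y^2 = q*p' := Real.sq_sqrt (mul_nonneg hq hp')
  have hU2 : U^2 = p*p' := Real.sq_sqrt (mul_nonneg hp hp')
  have hV2 : V^2 = q*q' := Real.sq_sqrt (mul_nonneg hq hq')
  have hXn : 0 ≤ X := Real.sqrt_nonneg _
  have hYn : 0 ≤ Y := Real.sqrt_nonneg _
  have hUV : U*V = X*Y := by
    rw [hU, hV, hX, hY, ← Real.sqrt_mul (mul_nonneg hp hp'), ← Real.sqrt_mul (mul_nonneg hp hq')]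
    ring_nf
  have hXcY : X ≤ c*Y := by
    rw [hX, hY]
    calc Real.sqrt (p*q') ≤ Real.sqrt (c^2*(q*p')) := Real.sqrt_le_sqrt h1
      _ = c * Real.sqrt (q*p') := by
          rw [Real.sqrt_mul (sq_nonneg c), Real.sqrt_sq (le_of_lt hc0)]
  have hYcX : Y ≤ c*X := by
    rw [hX, hY]
    calc Real.sqrt (q*p') ≤ Real.sqrt (c^2*(p*q')) := Real.sqrt_le_sqrt h2
      _ = c * Real.sqrt (p*q') := by
          rw [Real.sqrt_mul (sq_nonneg c), Real.sqrt_sq (le_of_lt hc0)]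
  -- AM-GM step
  have amgm : 2*a*b*(X*Y) ≤ b^2*(p*p') + a^2*(q*q') := by
    have h := sq_nonneg (b*U - a*V)
    have h' : 2*a*b*(U*V) ≤ b^2*U^2 + a^2*V^2 := by nlinarith [h]
    rw [hUV, hU2, hV2] at h'
    linarith
  have hsecond : 0 ≤ (a^2+b^2+2*a*b*c)*X + (c*(a^2+b^2+2*a*b*c) - 2*a*b*(c^2-1))*Y := by
    nlinarith [mul_le_mul_of_nonneg_left hYcX (show (0:ℝ) ≤ a^2+b^2+2*a*b*c by positivity),
      mul_nonneg hYn (show (0:ℝ) ≤ (c^2+1)*(a^2+b^2)+4*a*b*c by positivity), hc0]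
  have hPhi : 0 ≤ (c*Y-X)*((a^2+b^2+2*a*b*c)*X + (c*(a^2+b^2+2*a*b*c) - 2*a*b*(c^2-1))*Y) :=
    mul_nonneg (by linarith) hsecond
  have hB : 0 ≤ (c^2-1)*(b^2*(p*p')+a^2*(q*q')-2*a*b*c*(q*p'))
      + (a^2+b^2+2*a*b*c)*(c^2*(q*p') - p*q') := by
    have expand : (c^2-1)*(b^2*(p*p')+a^2*(q*q')-2*a*b*c*(q*p'))
        + (a^2+b^2+2*a*b*c)*(c^2*(q*p') - p*q')
        = (c*Y-X)*((a^2+b^2+2*a*b*c)*X + (c*(a^2+b^2+2*a*b*c) - 2*a*b*(c^2-1))*Y)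
          + (c^2-1)*((b^2*(p*p')+a^2*(q*q')) - 2*a*b*(X*Y)) := by
      rw [← hX2, ← hY2]
      ring
    have h5 := mul_nonneg hc2 (sub_nonneg.mpr amgm)
    rw [expand]
    linarith [hPhi, h5]
  have idty : (p+q)*(b^2*p'+a^2*q')*(c*b+a)^2 - (b^2*p + a^2*q)*(p'+q')*(b+c*a)^2
      = (b^2-a^2)*((c^2-1)*(b^2*(p*p')+a^2*(q*q')-2*a*b*c*(q*p'))
        + (a^2+b^2+2*a*b*c)*(c^2*(q*p') - p*q')) := by ring
  have hba : 0 ≤ b^2 - a^2 := by nlinarith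
  rw [← sub_nonneg, idty]
  exact mul_nonneg hba hB

lemma chain_ratio {N1 D1 N2 D2 N3 D3 : ℝ} (hD2 : 0 < D2) (hD3 : 0 ≤ D3) (hD1 : 0 ≤ D1)
    (hA : N1*D2 ≤ N2*D1) (hB : N2*D3 ≤ N3*D2) : N1*D3 ≤ N3*D1 := by
  nlinarith [mul_le_mul_of_nonneg_right hA hD3, mul_le_mul_of_nonneg_right hB hD1, hD2]

lemma vertex_reduction {mm : ℕ} (hm : 0 < mm) (w w' : Fin mm → ℝ)
    (hw : ∀ k, 0 < w k) (hw' : ∀ k, 0 < w' k)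
    {α β : ℝ} (hα : 0 < α) (hαβ : α ≤ β) :
    ∀ (s : Finset (Fin mm)) (r : Fin mm → ℝ), (∀ k, α ≤ r k ∧ r k ≤ β) →
    (∀ k, k ∉ s → r k = α ∨ r k = β) →
    ∃ σ : Fin mm → ℝ, (∀ k, σ k = α ∨ σ k = β) ∧
      (∑ k, w k * r k) * (∑ k, w' k * σ k) ≤ (∑ k, w k * σ k) * (∑ k, w' k * r k) := by
  haveI : Nonempty (Fin mm) := ⟨⟨0, hm⟩⟩
  intro s
  induction s using Finset.induction_on with
  | empty =>
    intro r hr hv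
    exact ⟨r, fun k => hv k (Finset.notMem_empty k), le_rfl⟩
  | @insert a s hanotin ih =>
    intro r hr hv
    classical
    have hsum : ∀ (g : Fin mm → ℝ) (y : ℝ),
        (∑ k, g k * Function.update r a y k) = (∑ k, g k * r k) + g a * (y - r a) := by
      intro g y
      have hpt : ∀ k, g k * Function.update r a y k
          = g k * r k + (if k = a then g a * (y - r a) else 0) := by
        intro k
        by_cases h : k = a
        · subst h; rw [Function.update_self]; simp only [eq_self_iff_true, ite_true]; ring
        · rw [Function.update_of_ne h]; simp [h]
      rw [Finset.sum_congr rfl (fun k _ => hpt k), Finset.sum_add_distrib,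
        Finset.sum_ite_eq' Finset.univ a]
      simp
    have hdisj : (∑ k, w k * r k) * (∑ k, w' k * Function.update r a α k)
          ≤ (∑ k, w k * Function.update r a α k) * (∑ k, w' k * r k)
        ∨ (∑ k, w k * r k) * (∑ k, w' k * Function.update r a β k)
          ≤ (∑ k, w k * Function.update r a β k) * (∑ k, w' k * r k) := by
      by_contra hcon
      push_neg at hcon
      obtain ⟨hc1, hc2⟩ := hcon
      rw [hsum w α, hsum w' α] at hc1
      rw [hsum w β, hsum w' β] at hc2
      set N := ∑ k, w k * r k with hN
      set D := ∑ k, w' k * r k with hD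
      have hc1' : 0 < (α - r a)*(N*w' a - D*w a) := by nlinarith [hc1]
      have hc2' : 0 < (β - r a)*(N*w' a - D*w a) := by nlinarith [hc2]
      have hxa : 0 ≤ r a - α := by linarith [(hr a).1]
      have hxb : 0 ≤ β - r a := by linarith [(hr a).2]
      nlinarith [mul_pos hc1' hc2', mul_nonneg (mul_nonneg hxa hxb)
        (sq_nonneg (N*w' a - D*w a))]
    have spos : ∀ (g f : Fin mm → ℝ), (∀ k, 0 < g k) → (∀ k, 0 < f k) →
        0 < ∑ k, g k * f k := fun g f hg hf =>
      Finset.sum_pos (fun k _ => mul_pos (hg k) (hf k)) Finset.univ_nonempty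
    have step : ∀ y, α ≤ y → y ≤ β →
        (∑ k, w k * r k) * (∑ k, w' k * Function.update r a y k)
          ≤ (∑ k, w k * Function.update r a y k) * (∑ k, w' k * r k) →
        (y = α ∨ y = β) →
        ∃ σ : Fin mm → ℝ, (∀ k, σ k = α ∨ σ k = β) ∧ (∑ k, w k * r k) * (∑ k, w' k * σ k)
          ≤ (∑ k, w k * σ k) * (∑ k, w' k * r k) := by
      intro y hy1 hy2 hle hyv
      have hbnd : ∀ k, α ≤ Function.update r a y k ∧ Function.update r a y k ≤ β := by
        intro k
        by_cases h : k = a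
        · subst h; rw [Function.update_self]; exact ⟨hy1, hy2⟩
        · rw [Function.update_of_ne h]; exact hr k
      obtain ⟨σ, hσv, hσ⟩ := ih (Function.update r a y) hbnd
        (fun k hk => by
          by_cases h : k = a
          · subst h
            rw [Function.update_self]
            exact hyv
          · rw [Function.update_of_ne h]
            exact hv k (by simp [Finset.mem_insert, h, hk]))
      refine ⟨σ, hσv, ?_⟩
      have hσpos : ∀ k, 0 < σ k := by
        intro k
        rcases hσv k with h | h <;> rw [h] <;> linarith
      have hr'pos : ∀ k, 0 < Function.update r a y k := fun k => lt_of_lt_of_le hα (hbnd k).1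
      exact chain_ratio (spos w' _ hw' hr'pos) (le_of_lt (spos w' σ hw' hσpos))
        (le_of_lt (spos w' r hw' (fun k => lt_of_lt_of_le hα (hr k).1))) hle hσ
    rcases hdisj with h | h
    · exact step α le_rfl hαβ h (Or.inl rfl)
    · exact step β hαβ le_rfl h (Or.inr rfl)

lemma mulVec_apply_eq {nn mm : ℕ} (A : Matrix (Fin nn) (Fin mm) ℝ) (u : Fin mm → ℝ)
    (j : Fin nn) : (A *ᵥ u) j = ∑ k, A j k * u k := by
  simp [Matrix.mulVec, dotProduct]

lemma mulVec_pos {nn mm : ℕ} (hm : 0 < mm) {A : Matrix (Fin nn) (Fin mm) ℝ}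
    (hA : ∀ j k, 0 < A j k) {u : Fin mm → ℝ} (hu : ∀ k, 0 < u k) (j : Fin nn) :
    0 < (A *ᵥ u) j := by
  haveI : Nonempty (Fin mm) := ⟨⟨0, hm⟩⟩
  rw [mulVec_apply_eq]
  exact Finset.sum_pos (fun k _ => mul_pos (hA j k) (hu k)) Finset.univ_nonempty

lemma birkhoffGamma_pair {nn mm : ℕ} {A : Matrix (Fin nn) (Fin mm) ℝ}
    (hA : ∀ j k, 0 < A j k) (j j' : Fin nn) (k l : Fin mm) :
    A j k * A j' l ≤ birkhoffGamma A * (A j' k * A j l) := by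
  have h := le_ciSup (Set.Finite.bddAbove (Set.finite_range
    (fun p : (Fin nn × Fin nn) × Fin mm × Fin mm =>
      A p.1.1 p.2.1 * A p.1.2 p.2.2 / (A p.1.2 p.2.1 * A p.1.1 p.2.2)))) ((j, j'), (k, l))
  simp only at h
  rw [div_le_iff₀ (mul_pos (hA j' k) (hA j l))] at h
  exact h

lemma birkhoffGamma_one_le {nn mm : ℕ} (hn : 0 < nn) (hm : 0 < mm)
    {A : Matrix (Fin nn) (Fin mm) ℝ} (hA : ∀ j k, 0 < A j k) :
    1 ≤ birkhoffGamma A := by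
  have h := birkhoffGamma_pair hA ⟨0, hn⟩ ⟨0, hn⟩ ⟨0, hm⟩ ⟨0, hm⟩
  have hp := hA (⟨0, hn⟩ : Fin nn) (⟨0, hm⟩ : Fin mm)
  nlinarith [h, mul_pos hp hp]

lemma birkhoff_contraction {nn mm : ℕ} (hn : 0 < nn) (hm : 0 < mm)
    (A : Matrix (Fin nn) (Fin mm) ℝ) (hA : ∀ j k, 0 < A j k)
    (u v : Fin mm → ℝ) (hu : ∀ k, 0 < u k) (hv : ∀ k, 0 < v k) :
    dH (A *ᵥ u) (A *ᵥ v) ≤ birkhoffLambda A * dH u v := by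
  classical
  haveI : Nonempty (Fin mm) := ⟨⟨0, hm⟩⟩
  haveI : Nonempty (Fin nn) := ⟨⟨0, hn⟩⟩
  have hγ1 : 1 ≤ birkhoffGamma A := birkhoffGamma_one_le hn hm hA
  set c := Real.sqrt (birkhoffGamma A) with hcdef
  have hc1 : 1 ≤ c := by
    rw [hcdef, show (1:ℝ) = Real.sqrt 1 by rw [Real.sqrt_one]]
    exact Real.sqrt_le_sqrt hγ1
  have hc2 : c^2 = birkhoffGamma A := Real.sq_sqrt (by linarith)
  have hc0 : 0 < c := lt_of_lt_of_le one_pos hc1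
  -- ratio bounds
  set β := ⨆ k, u k / v k with hβdef
  set αi := ⨆ k, v k / u k with hαidef
  have hβpos : 0 < β := Spos hm hu hv
  have hαipos : 0 < αi := Spos hm hv hu
  set α := αi⁻¹ with hαdef
  have hαpos : 0 < α := inv_pos.mpr hαipos
  have hub : ∀ k, u k / v k ≤ β := fun k => le_ciSup_fin (fun k => u k / v k) k
  have hlb : ∀ k, α ≤ u k / v k := by
    intro k
    rw [hαdef, show u k / v k = (v k / u k)⁻¹ from (inv_div _ _).symm]
    exact inv_anti₀ (div_pos (hv k) (hu k)) (le_ciSup_fin (fun k => v k / u k) k)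
  have hαβ : α ≤ β := le_trans (hlb ⟨0, hm⟩) (hub ⟨0, hm⟩)
  set aa := Real.sqrt α with haadef
  set bb := Real.sqrt β with hbbdef
  have haa2 : aa^2 = α := Real.sq_sqrt (le_of_lt hαpos)
  have hbb2 : bb^2 = β := Real.sq_sqrt (le_of_lt (lt_of_lt_of_le hαpos hαβ))
  have haapos : 0 < aa := Real.sqrt_pos.mpr hαpos
  have hbbpos : 0 < bb := Real.sqrt_pos.mpr (lt_of_lt_of_le hαpos hαβ)
  have haabb : aa ≤ bb := Real.sqrt_le_sqrt hαβ
  -- main pairwise claim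
  have pair : ∀ j j', (A *ᵥ u) j * (A *ᵥ v) j' * (bb + c*aa)^2
      ≤ (A *ᵥ v) j * (A *ᵥ u) j' * (c*bb + aa)^2 := by
    intro j j'
    set w : Fin mm → ℝ := fun k => A j k * v k with hwdef
    set w' : Fin mm → ℝ := fun k => A j' k * v k with hw'def
    have hwpos : ∀ k, 0 < w k := fun k => mul_pos (hA j k) (hv k)
    have hw'pos : ∀ k, 0 < w' k := fun k => mul_pos (hA j' k) (hv k)
    set r : Fin mm → ℝ := fun k => u k / v k with hrdef
    have hAuj : (A *ᵥ u) j = ∑ k, w k * r k := by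
      rw [mulVec_apply_eq]
      apply Finset.sum_congr rfl
      intro k _
      rw [hwdef, hrdef]
      field_simp [(hv k).ne']
    have hAuj' : (A *ᵥ u) j' = ∑ k, w' k * r k := by
      rw [mulVec_apply_eq]
      apply Finset.sum_congr rfl
      intro k _
      rw [hw'def, hrdef]
      field_simp [(hv k).ne']
    have hAvj : (A *ᵥ v) j = ∑ k, w k := by
      rw [mulVec_apply_eq]
    have hAvj' : (A *ᵥ v) j' = ∑ k, w' k := by
      rw [mulVec_apply_eq]
    obtain ⟨σ, hσv, hσ⟩ := vertex_reduction hm w w' hwpos hw'pos hαpos hαβ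
      Finset.univ r (fun k => ⟨hlb k, hub k⟩) (fun k hk => absurd (Finset.mem_univ k) hk)
    set S := Finset.univ.filter (fun k => σ k = β) with hSdef
    set p := ∑ k ∈ S, w k with hpdef
    set q := ∑ k ∈ Finset.univ.filter (fun k => ¬ σ k = β), w k with hqdef
    set p' := ∑ k ∈ S, w' k with hp'def
    set q' := ∑ k ∈ Finset.univ.filter (fun k => ¬ σ k = β), w' k with hq'def
    have hsplitgen : ∀ g : Fin mm → ℝ, (∑ k, g k * σ k)
        = β * (∑ k ∈ S, g k) + α * (∑ k ∈ Finset.univ.filter (fun k => ¬ σ k = β), g k) := by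
      intro g
      rw [← Finset.sum_filter_add_sum_filter_not Finset.univ (fun k => σ k = β)
        (fun k => g k * σ k)]
      congr 1
      · rw [Finset.mul_sum]
        apply Finset.sum_congr rfl
        intro k hk
        rw [(Finset.mem_filter.mp hk).2]
        ring
      · rw [Finset.mul_sum]
        apply Finset.sum_congr rfl
        intro k hk
        have h1 : σ k = α := by
          rcases hσv k with h | h
          · exact h
          · exact absurd h (Finset.mem_filter.mp hk).2
        rw [h1]
        ring
    have hWsplit : (∑ k, w k) = p + q :=
      (Finset.sum_filter_add_sum_filter_not Finset.univ (fun k => σ k = β) w).symm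
    have hW'split : (∑ k, w' k) = p' + q' :=
      (Finset.sum_filter_add_sum_filter_not Finset.univ (fun k => σ k = β) w').symm
    have hppos : 0 ≤ p := Finset.sum_nonneg (fun k _ => le_of_lt (hwpos k))
    have hqpos : 0 ≤ q := Finset.sum_nonneg (fun k _ => le_of_lt (hwpos k))
    have hp'pos : 0 ≤ p' := Finset.sum_nonneg (fun k _ => le_of_lt (hw'pos k))
    have hq'pos : 0 ≤ q' := Finset.sum_nonneg (fun k _ => le_of_lt (hw'pos k))
    have cross : ∀ (s t : Finset (Fin mm)),
        (∑ k ∈ s, w k) * (∑ l ∈ t, w' l) ≤ birkhoffGamma A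
          * ((∑ l ∈ t, w l) * (∑ k ∈ s, w' k)) := by
      intro s t
      rw [Finset.sum_mul_sum]
      have expand : (∑ l ∈ t, w l) * (∑ k ∈ s, w' k) = ∑ k ∈ s, ∑ l ∈ t, w l * w' k := by
        rw [Finset.sum_comm, Finset.sum_mul_sum]
      rw [expand, Finset.mul_sum]
      apply Finset.sum_le_sum
      intro k _
      rw [Finset.mul_sum]
      apply Finset.sum_le_sum
      intro l _
      have h := birkhoffGamma_pair hA j j' k l
      have hvkl : 0 < v k * v l := mul_pos (hv k) (hv l)
      rw [hwdef, hw'def]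
      simp only
      calc A j k * v k * (A j' l * v l) = (A j k * A j' l) * (v k * v l) := by ring
        _ ≤ (birkhoffGamma A * (A j' k * A j l)) * (v k * v l) :=
            mul_le_mul_of_nonneg_right h (le_of_lt hvkl)
        _ = birkhoffGamma A * (A j l * v l * (A j' k * v k)) := by ring
    have hcross1 : p * q' ≤ c^2 * (q * p') := by
      rw [hc2]
      exact cross S (Finset.univ.filter (fun k => ¬ σ k = β))
    have hcross2 : q * p' ≤ c^2 * (p * q') := by
      rw [hc2]
      exact cross (Finset.univ.filter (fun k => ¬ σ k = β)) S
    have core := core_poly haapos haabb hc1 hppos hqpos hp'pos hq'pos hcross1 hcross2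
    rw [haa2, hbb2] at core
    -- core : (β*p + α*q)*(p'+q')*(bb+c*aa)^2 ≤ (p+q)*(β*p'+α*q')*(c*bb+aa)^2
    have hNσ : (∑ k, w k * σ k) = β * p + α * q := hsplitgen w
    have hDσ : (∑ k, w' k * σ k) = β * p' + α * q' := hsplitgen w'
    have hDσpos : 0 < ∑ k, w' k * σ k := by
      apply Finset.sum_pos _ Finset.univ_nonempty
      intro k _
      apply mul_pos (hw'pos k)
      rcases hσv k with h | h <;> rw [h] <;> linarith
    rw [hAuj, hAuj', hAvj, hAvj']
    have hB : (∑ k, w k * σ k) * ((∑ k, w' k) * (bb + c*aa)^2)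
        ≤ ((∑ k, w k) * (c*bb + aa)^2) * (∑ k, w' k * σ k) := by
      rw [hNσ, hDσ, hWsplit, hW'split]
      linarith [core]
    have goal' : (∑ k, w k * r k) * ((∑ k, w' k) * (bb + c*aa)^2)
        ≤ ((∑ k, w k) * (c*bb + aa)^2) * (∑ k, w' k * r k) :=
      chain_ratio hDσpos
        (le_of_lt (mul_pos (Finset.sum_pos (fun k _ => hw'pos k) Finset.univ_nonempty)
          (pow_pos (add_pos hbbpos (mul_pos hc0 haapos)) 2)))
        (le_of_lt (Finset.sum_pos (fun k _ => mul_pos (hw'pos k)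
          (div_pos (hu k) (hv k))) Finset.univ_nonempty))
        hσ hB
    linarith [goal']
  -- conclude
  obtain ⟨j, hj⟩ := exists_eq_ciSup_fin (fun j => (A *ᵥ u) j / (A *ᵥ v) j)
  obtain ⟨j', hj'⟩ := exists_eq_ciSup_fin (fun j => (A *ᵥ v) j / (A *ᵥ u) j)
  have hAu : ∀ i, 0 < (A *ᵥ u) i := mulVec_pos hm hA hu
  have hAv : ∀ i, 0 < (A *ᵥ v) i := mulVec_pos hm hA hv
  have hposd1 : 0 < bb + c*aa := add_pos hbbpos (mul_pos hc0 haapos)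
  have hposd2 : 0 < c*bb + aa := add_pos (mul_pos hc0 hbbpos) haapos
  have hratio : (A *ᵥ u) j / (A *ᵥ v) j * ((A *ᵥ v) j' / (A *ᵥ u) j')
      ≤ ((c*bb + aa)/(bb + c*aa))^2 := by
    rw [div_pow, div_mul_div_comm,
      div_le_div_iff₀ (mul_pos (hAv j) (hAu j')) (pow_pos hposd1 2)]
    nlinarith [pair j j']
  have hdHAuv : dH (A *ᵥ u) (A *ᵥ v)
      ≤ 2 * (Real.log (c*(bb/aa)+1) - Real.log ((bb/aa)+c)) := by
    rw [dH, hj, hj']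
    calc Real.log ((A *ᵥ u) j / (A *ᵥ v) j * ((A *ᵥ v) j' / (A *ᵥ u) j'))
        ≤ Real.log (((c*bb + aa)/(bb + c*aa))^2) := by
          apply Real.log_le_log _ hratio
          exact mul_pos (div_pos (hAu j) (hAv j)) (div_pos (hAv j') (hAu j'))
      _ = 2 * (Real.log (c*(bb/aa)+1) - Real.log ((bb/aa)+c)) := by
          have e1 : c*bb + aa = aa * (c*(bb/aa)+1) := by
            field_simp
          have e2 : bb + c*aa = aa * ((bb/aa)+c) := by
            field_simp
          rw [div_pow, Real.log_div (by positivity) (by positivity), e1, e2]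
          rw [mul_pow, mul_pow, Real.log_mul (by positivity) (by positivity),
            Real.log_mul (by positivity) (by positivity)]
          rw [Real.log_pow, Real.log_pow, Real.log_pow]
          push_cast
          ring
  have hdHuv : dH u v = 2 * Real.log (bb/aa) := by
    rw [dH, ← hβdef, ← hαidef]
    have hai : αi = α⁻¹ := by rw [hαdef, inv_inv]
    rw [hai, ← div_eq_mul_inv, Real.log_div (ne_of_gt hβpos) (ne_of_gt hαpos),
      ← hbb2, ← haa2, Real.log_pow, Real.log_pow]
    rw [Real.log_div (ne_of_gt hbbpos) (ne_of_gt haapos)]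
    push_cast
    ring
  have hx1 : 1 ≤ bb/aa := (one_le_div haapos).mpr haabb
  have hkey := log_ratio_le hc1 hx1
  have hlam : birkhoffLambda A = (c - 1) / (c + 1) := rfl
  rw [hlam, hdHuv]
  have hc1pos : 0 < c + 1 := by linarith
  calc dH (A *ᵥ u) (A *ᵥ v) ≤ 2 * (Real.log (c*(bb/aa)+1) - Real.log ((bb/aa)+c)) := hdHAuv
    _ ≤ (c - 1) / (c + 1) * (2 * Real.log (bb/aa)) := by
        rw [div_mul_eq_mul_div, le_div_iff₀ hc1pos]
        nlinarith [hkey]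

lemma isMax_deriv_zero {φ : ℝ → ℝ} {d : ℝ} (hmax : ∀ t, φ t ≤ φ 0)
    (hd : HasDerivAt φ d 0) : d = 0 :=
  IsLocalMax.hasDerivAt_eq_zero (Filter.Eventually.of_forall hmax) hd

lemma stationary_eq {εp S1 S2 A : ℝ} (hε : 0 < εp)
    (h : ∀ t : ℝ, A*t - εp*((Real.exp (t/εp) - 1)*S1 + (Real.exp (-t/εp) - 1)*S2) ≤ 0) :
    A = S1 - S2 := by
  set φ : ℝ → ℝ := fun t => A*t - εp*((Real.exp (t/εp) - 1)*S1 + (Real.exp (-t/εp) - 1)*S2)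
    with hφ
  have hφ0 : φ 0 = 0 := by simp [hφ]
  have hmax : ∀ t, φ t ≤ φ 0 := by
    intro t
    rw [hφ0]
    exact h t
  have hd : HasDerivAt φ (A - (S1 - S2)) 0 := by
    have h1 : HasDerivAt (fun t : ℝ => t/εp) (1/εp) 0 := by
      simpa using (hasDerivAt_id (0:ℝ)).div_const εp
    have h2 : HasDerivAt (fun t : ℝ => Real.exp (t/εp)) (1/εp) 0 := by
      have := h1.exp
      simpa using this
    have h3 : HasDerivAt (fun t : ℝ => -t/εp) (-(1/εp)) 0 := by
      have h1n : HasDerivAt (fun t : ℝ => -(t/εp)) (-(1/εp)) 0 := h1.neg; simpa [neg_div] using h1n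
    have h4 : HasDerivAt (fun t : ℝ => Real.exp (-t/εp)) (-(1/εp)) 0 := by
      have := h3.exp
      simpa using this
    have h5 : HasDerivAt (fun t : ℝ => (Real.exp (t/εp) - 1)*S1 + (Real.exp (-t/εp) - 1)*S2)
        ((1/εp)*S1 + (-(1/εp))*S2) 0 := ((h2.sub_const 1).mul_const S1).add
      ((h4.sub_const 1).mul_const S2)
    have h6 : HasDerivAt (fun t : ℝ => A*t) A 0 := by
      simpa using (hasDerivAt_id (0:ℝ)).const_mul A
    have h7 := h6.sub (h5.const_mul εp)
    have : A - εp*((1/εp)*S1 + (-(1/εp))*S2) = A - (S1 - S2) := by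
      field_simp
      ring
    rw [← this]
    exact h7
  have := isMax_deriv_zero hmax hd
  linarith

lemma pert_sum_row {m1 m2 : ℕ} {εp : ℝ} (hε : εp ≠ 0) (t : ℝ)
    (G : Fin m1 → Fin m2 → ℝ) (j₀ : Fin m1) :
    ∑ j, ∑ k, Real.exp ((G j k + if j = j₀ then t else 0) / εp)
      = (∑ j, ∑ k, Real.exp (G j k / εp))
        + (Real.exp (t/εp) - 1) * ∑ k, Real.exp (G j₀ k / εp) := by
  classical
  have hpt : ∀ j, (∑ k, Real.exp ((G j k + if j = j₀ then t else 0)/εp))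
      = (∑ k, Real.exp (G j k / εp))
        + (if j = j₀ then (Real.exp (t/εp) - 1) * ∑ k, Real.exp (G j k/εp) else 0) := by
    intro j
    by_cases h : j = j₀
    · simp only [h, if_true]
      have : ∀ k, Real.exp ((G j₀ k + t)/εp) = Real.exp (G j₀ k/εp) * Real.exp (t/εp) := by
        intro k
        rw [← Real.exp_add, ← add_div]
      rw [Finset.sum_congr rfl (fun k _ => this k)]
      rw [← Finset.sum_mul]
      ring
    · simp [h]
  rw [Finset.sum_congr rfl (fun j _ => hpt j), Finset.sum_add_distrib,
    Finset.sum_ite_eq' Finset.univ j₀]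
  simp

lemma pert_sum_col {m1 m2 : ℕ} {εp : ℝ} (hε : εp ≠ 0) (t : ℝ)
    (G : Fin m1 → Fin m2 → ℝ) (k₀ : Fin m2) :
    ∑ j, ∑ k, Real.exp ((G j k + if k = k₀ then t else 0) / εp)
      = (∑ j, ∑ k, Real.exp (G j k / εp))
        + (Real.exp (t/εp) - 1) * ∑ j, Real.exp (G j k₀ / εp) := by
  rw [Finset.sum_comm, pert_sum_row hε t (fun k j => G j k) k₀, Finset.sum_comm]

lemma exp_conv_sub {εp x y cc : ℝ} (hε : 0 < εp) (hx : 0 < x) (hy : 0 < y) :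
    Real.exp ((εp*Real.log x - εp*Real.log y - cc)/εp)
      = x * Real.exp (-cc/εp) * y⁻¹ := by
  have harg : (εp*Real.log x - εp*Real.log y - cc)/εp
      = Real.log x + (-Real.log y + (-cc/εp)) := by
    field_simp
    ring
  rw [harg, Real.exp_add, Real.exp_add, Real.exp_log hx, Real.exp_neg, Real.exp_log hy]
  ring

lemma exp_conv_add {εp x y cc : ℝ} (hε : 0 < εp) (hx : 0 < x) (hy : 0 < y) :
    Real.exp ((εp*Real.log x + εp*Real.log y - cc)/εp)
      = x * Real.exp (-cc/εp) * y := by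
  have harg : (εp*Real.log x + εp*Real.log y - cc)/εp
      = Real.log x + (Real.log y + (-cc/εp)) := by
    field_simp
    ring
  rw [harg, Real.exp_add, Real.exp_add, Real.exp_log hx, Real.exp_log hy]
  ring

lemma birkhoffGamma_transpose {nn mm : ℕ} (hn : 0 < nn) (hm : 0 < mm)
    (A : Matrix (Fin nn) (Fin mm) ℝ) (hA : ∀ j k, 0 < A j k) :
    birkhoffGamma Aᵀ = birkhoffGamma A := by
  haveI : Nonempty (Fin nn) := ⟨⟨0, hn⟩⟩
  haveI : Nonempty (Fin mm) := ⟨⟨0, hm⟩⟩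
  apply le_antisymm
  · apply ciSup_le
    intro p
    have h := le_ciSup (Set.Finite.bddAbove (Set.finite_range
      (fun p : (Fin nn × Fin nn) × Fin mm × Fin mm =>
        A p.1.1 p.2.1 * A p.1.2 p.2.2 / (A p.1.2 p.2.1 * A p.1.1 p.2.2))))
      ((p.2.1, p.2.2), (p.1.1, p.1.2))
    simp only [Matrix.transpose_apply]
    calc A p.2.1 p.1.1 * A p.2.2 p.1.2 / (A p.2.1 p.1.2 * A p.2.2 p.1.1)
        = A p.2.1 p.1.1 * A p.2.2 p.1.2 / (A p.2.2 p.1.1 * A p.2.1 p.1.2) := by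
          rw [mul_comm (A p.2.2 p.1.1)]
      _ ≤ birkhoffGamma A := h
  · apply ciSup_le
    intro p
    have h := le_ciSup (Set.Finite.bddAbove (Set.finite_range
      (fun p : (Fin mm × Fin mm) × Fin nn × Fin nn =>
        Aᵀ p.1.1 p.2.1 * Aᵀ p.1.2 p.2.2 / (Aᵀ p.1.2 p.2.1 * Aᵀ p.1.1 p.2.2))))
      ((p.2.1, p.2.2), (p.1.1, p.1.2))
    simp only [Matrix.transpose_apply] at h
    calc A p.1.1 p.2.1 * A p.1.2 p.2.2 / (A p.1.2 p.2.1 * A p.1.1 p.2.2)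
        = A p.1.1 p.2.1 * A p.1.2 p.2.2 / (A p.1.1 p.2.2 * A p.1.2 p.2.1) := by
          rw [mul_comm (A p.1.2 p.2.1)]
      _ ≤ birkhoffGamma Aᵀ := h

lemma birkhoffLambda_transpose {nn mm : ℕ} (hn : 0 < nn) (hm : 0 < mm)
    (A : Matrix (Fin nn) (Fin mm) ℝ) (hA : ∀ j k, 0 < A j k) :
    birkhoffLambda Aᵀ = birkhoffLambda A := by
  rw [birkhoffLambda, birkhoffLambda, birkhoffGamma_transpose hn hm A hA]

lemma birkhoffLambda_nonneg {nn mm : ℕ} (hn : 0 < nn) (hm : 0 < mm)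
    (A : Matrix (Fin nn) (Fin mm) ℝ) (hA : ∀ j k, 0 < A j k) :
    0 ≤ birkhoffLambda A := by
  have hγ1 : 1 ≤ birkhoffGamma A := birkhoffGamma_one_le hn hm hA
  have hc1 : 1 ≤ Real.sqrt (birkhoffGamma A) := by
    rw [show (1:ℝ) = Real.sqrt 1 by rw [Real.sqrt_one]]
    exact Real.sqrt_le_sqrt hγ1
  apply div_nonneg <;> linarith

lemma birkhoffLambda_le_one {nn mm : ℕ} (A : Matrix (Fin nn) (Fin mm) ℝ) :
    birkhoffLambda A ≤ 1 := by
  have h0 : 0 ≤ Real.sqrt (birkhoffGamma A) := Real.sqrt_nonneg _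
  rw [birkhoffLambda, div_le_one (by linarith)]
  linarith

end Helpers

/-- **Exponential convergence of the Sinkhorn iteration for general `M ≥ 2`**
(Thm. 3.8, with `M = N + 2`): for a dual-optimal tuple `(û⁽ⁱ⁾)`, one has
`d_H(u^{n,i}, û⁽ⁱ⁾) ≤ Eⁿ·e` for every `n` and every `i = 1, …, M + 1`. -/
theorem sinkhorn_exponential_convergence_general
    (N : ℕ) (m : ℕ → ℕ) (hm : ∀ i, 0 < m i)
    (C : ∀ i : ℕ, Matrix (Fin (m i)) (Fin (m (i+1))) ℝ)
    (hC : ∀ i, ∀ j k, 0 ≤ C i j k)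
    (a : Fin (m 1) → ℝ) (b : Fin (m (N+3)) → ℝ)
    (ha : ∀ j, 0 < a j) (hb : ∀ k, 0 < b k)
    (hasum : ∑ j, a j = 1) (hbsum : ∑ k, b k = 1)
    (ε : ℝ) (hε : 0 < ε)
    (K : ∀ i : ℕ, Matrix (Fin (m i)) (Fin (m (i+1))) ℝ)
    (hK : ∀ i j k, K i j k = Real.exp (-C i j k / ε))
    (u : ℕ → ∀ i : ℕ, Fin (m i) → ℝ)
    (hu0 : ∀ i : ℕ, 1 ≤ i → i ≤ N + 3 → ∀ j, 0 < u 0 i j)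
    (hrecMid : ∀ n : ℕ, ∀ i : ℕ, 1 ≤ i → i ≤ N →
      u (n+1) (i+1) = fun j => Real.sqrt (((K i)ᵀ *ᵥ u n i) j /
        (K (i+1) *ᵥ fun k => (u n (i+2) k)⁻¹) j))
    (hrecM : ∀ n : ℕ, u (n+1) (N+2) = fun j =>
      Real.sqrt (((K (N+1))ᵀ *ᵥ u n (N+1)) j / (K (N+2) *ᵥ u n (N+3)) j))
    (hrecFirst : ∀ n : ℕ, u (n+1) 1 = fun j =>
      a j / (K 1 *ᵥ fun k => (u (n+1) 2 k)⁻¹) j)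
    (hrecLast : ∀ n : ℕ, u (n+1) (N+3) = fun k =>
      b k / ((K (N+2))ᵀ *ᵥ u (n+1) (N+2)) k)
    (uhat : ∀ i : ℕ, Fin (m i) → ℝ)
    (huhat : ∀ i : ℕ, 1 ≤ i → i ≤ N + 3 → ∀ j, 0 < uhat i j)
    (hopt : ∀ g : ∀ i : ℕ, Fin (m i) → ℝ,
      dualGen N m C a b ε g ≤ dualGen N m C a b ε (fun i j => ε * Real.log (uhat i j)))
    (E e : ℝ)
    (hE : E = (Finset.Icc 1 (N+2)).sup'
      (Finset.nonempty_Icc.mpr (by omega)) (fun i => birkhoffLambda (K i)))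
    (he : e = (Finset.Icc 1 (N+3)).sup'
      (Finset.nonempty_Icc.mpr (by omega)) (fun i => dH (u 0 i) (uhat i))) :
    ∀ n : ℕ, ∀ i : ℕ, 1 ≤ i → i ≤ N + 3 →
      dH (u n i) (uhat i) ≤ E ^ n * e := by
  classical
  have hε' : ε ≠ 0 := ne_of_gt hε
  have hKpos : ∀ i : ℕ, ∀ (j : Fin (m i)) (k : Fin (m (i+1))), 0 < K i j k := by
    intro i j k
    rw [hK]
    exact Real.exp_pos _
  -- fixed point equations of the dual optimizer
  have hFP1 : ∀ j₀ : Fin (m 1),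
      uhat 1 j₀ * (K 1 *ᵥ fun k => (uhat 2 k)⁻¹) j₀ = a j₀ := by
    intro j₀
    set f : ∀ i : ℕ, Fin (m i) → ℝ := fun i j => ε * Real.log (uhat i j) with hfdef
    have hdual : ∀ t : ℝ, dualGen N m C a b ε
        (Function.update f 1 (fun j => f 1 j + if j = j₀ then t else 0))
        = dualGen N m C a b ε f
          + (a j₀ * t - ε * ((Real.exp (t/ε) - 1)
              * (∑ k, Real.exp ((f 1 j₀ - f 2 k - C 1 j₀ k)/ε))
            + (Real.exp (-t/ε) - 1) * 0)) := by
      intro t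
      set g := Function.update f 1 (fun j => f 1 j + if j = j₀ then t else 0) with hgdef
      have hg1 : g 1 = fun j => f 1 j + if j = j₀ then t else 0 := Function.update_self _ _ _
      have hgne : ∀ i : ℕ, i ≠ 1 → g i = f i := fun i hi => Function.update_of_ne hi _ _
      rw [dualGen, dualGen]
      have e1 : (∑ j, g 1 j * a j) = (∑ j, f 1 j * a j) + t * a j₀ := by
        rw [hg1]
        have hpt : ∀ j, (f 1 j + if j = j₀ then t else 0) * a j
            = f 1 j * a j + (if j = j₀ then t * a j else 0) := by
          intro j
          by_cases h : j = j₀ <;> simp [h] <;> ring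
        rw [Finset.sum_congr rfl (fun j _ => hpt j), Finset.sum_add_distrib,
          Finset.sum_ite_eq' Finset.univ j₀]
        simp
      have e2 : (∑ k, g (N+3) k * b k) = (∑ k, f (N+3) k * b k) := by
        rw [hgne (N+3) (by omega)]
      have e3 : (∑ j, ∑ k, Real.exp ((g (N+2) j + g (N+3) k - C (N+2) j k)/ε))
          = (∑ j, ∑ k, Real.exp ((f (N+2) j + f (N+3) k - C (N+2) j k)/ε)) := by
        rw [hgne (N+2) (by omega), hgne (N+3) (by omega)]
      have e4 : (∑ i ∈ Finset.Icc 1 (N+1), ∑ j, ∑ k,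
            Real.exp ((g i j - g (i+1) k - C i j k)/ε))
          = (∑ i ∈ Finset.Icc 1 (N+1), ∑ j, ∑ k,
              Real.exp ((f i j - f (i+1) k - C i j k)/ε))
            + (Real.exp (t/ε) - 1) * (∑ k, Real.exp ((f 1 j₀ - f 2 k - C 1 j₀ k)/ε)) := by
        have h1mem : (1:ℕ) ∈ Finset.Icc 1 (N+1) := by simp
        rw [← Finset.add_sum_erase _
          (fun i => ∑ j, ∑ k, Real.exp ((g i j - g (i+1) k - C i j k)/ε)) h1mem,
          ← Finset.add_sum_erase _
          (fun i => ∑ j, ∑ k, Real.exp ((f i j - f (i+1) k - C i j k)/ε)) h1mem]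
        have erest : (∑ i ∈ (Finset.Icc 1 (N+1)).erase 1,
            ∑ j, ∑ k, Real.exp ((g i j - g (i+1) k - C i j k)/ε))
            = ∑ i ∈ (Finset.Icc 1 (N+1)).erase 1,
              ∑ j, ∑ k, Real.exp ((f i j - f (i+1) k - C i j k)/ε) := by
          apply Finset.sum_congr rfl
          intro i hi
          have hi1 : i ≠ 1 := Finset.ne_of_mem_erase hi
          have hige : 1 ≤ i := (Finset.mem_Icc.mp (Finset.mem_of_mem_erase hi)).1
          rw [hgne i hi1, hgne (i+1) (by omega)]
        have efirst : (∑ j, ∑ k, Real.exp ((g 1 j - g (1+1) k - C 1 j k)/ε))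
            = (∑ j, ∑ k, Real.exp ((f 1 j - f (1+1) k - C 1 j k)/ε))
              + (Real.exp (t/ε) - 1)
                * (∑ k, Real.exp ((f 1 j₀ - f 2 k - C 1 j₀ k)/ε)) := by
          have hpt : ∀ (j : Fin (m 1)) (k : Fin (m 2)), ((g 1 j - g 2 k - C 1 j k)/ε)
              = (((f 1 j - f 2 k - C 1 j k) + if j = j₀ then t else 0)/ε) := by
            intro j k
            rw [hg1, hgne 2 (by omega)]
            ring_nf
          rw [Finset.sum_congr rfl (fun j _ => Finset.sum_congr rfl
            (fun k _ => by rw [hpt j k]))]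
          exact pert_sum_row hε' t (fun j k => f 1 j - f 2 k - C 1 j k) j₀
        rw [erest, efirst]
        ring
      rw [e1, e2, e3, e4]
      ring
    have hst := stationary_eq hε
      (S1 := ∑ k, Real.exp ((f 1 j₀ - f 2 k - C 1 j₀ k)/ε)) (S2 := 0) (A := a j₀)
      (fun t => by
        have h := hopt (Function.update f 1 (fun j => f 1 j + if j = j₀ then t else 0))
        rw [hdual t] at h
        linarith)
    have hSval : (∑ k, Real.exp ((f 1 j₀ - f 2 k - C 1 j₀ k)/ε))
        = uhat 1 j₀ * (K 1 *ᵥ fun k => (uhat 2 k)⁻¹) j₀ := by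
      rw [mulVec_apply_eq, Finset.mul_sum]
      apply Finset.sum_congr rfl
      intro k _
      have harg : f 1 j₀ - f 2 k - C 1 j₀ k
          = ε*Real.log (uhat 1 j₀) - ε*Real.log (uhat 2 k) - C 1 j₀ k := rfl
      rw [harg, exp_conv_sub hε (huhat 1 (by omega) (by omega) j₀)
        (huhat 2 (by omega) (by omega) k), hK 1 j₀ k]
      ring
    linarith [hSval, hst]
  have hFPlast : ∀ k₀ : Fin (m (N+3)),
      uhat (N+3) k₀ * ((K (N+2))ᵀ *ᵥ uhat (N+2)) k₀ = b k₀ := by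
    intro k₀
    set f : ∀ i : ℕ, Fin (m i) → ℝ := fun i j => ε * Real.log (uhat i j) with hfdef
    have hdual : ∀ t : ℝ, dualGen N m C a b ε
        (Function.update f (N+3) (fun k => f (N+3) k + if k = k₀ then t else 0))
        = dualGen N m C a b ε f
          + (b k₀ * t - ε * ((Real.exp (t/ε) - 1)
              * (∑ j, Real.exp ((f (N+2) j + f (N+3) k₀ - C (N+2) j k₀)/ε))
            + (Real.exp (-t/ε) - 1) * 0)) := by
      intro t
      set g := Function.update f (N+3) (fun k => f (N+3) k + if k = k₀ then t else 0)
        with hgdef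
      have hgl : g (N+3) = fun k => f (N+3) k + if k = k₀ then t else 0 :=
        Function.update_self _ _ _
      have hgne : ∀ i : ℕ, i ≠ N+3 → g i = f i := fun i hi => Function.update_of_ne hi _ _
      rw [dualGen, dualGen]
      have e1 : (∑ j, g 1 j * a j) = (∑ j, f 1 j * a j) := by
        rw [hgne 1 (by omega)]
      have e2 : (∑ k, g (N+3) k * b k) = (∑ k, f (N+3) k * b k) + t * b k₀ := by
        rw [hgl]
        have hpt : ∀ k, (f (N+3) k + if k = k₀ then t else 0) * b k
            = f (N+3) k * b k + (if k = k₀ then t * b k else 0) := by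
          intro k
          by_cases h : k = k₀ <;> simp [h] <;> ring
        rw [Finset.sum_congr rfl (fun k _ => hpt k), Finset.sum_add_distrib,
          Finset.sum_ite_eq' Finset.univ k₀]
        simp
      have e3 : (∑ j, ∑ k, Real.exp ((g (N+2) j + g (N+3) k - C (N+2) j k)/ε))
          = (∑ j, ∑ k, Real.exp ((f (N+2) j + f (N+3) k - C (N+2) j k)/ε))
            + (Real.exp (t/ε) - 1)
              * (∑ j, Real.exp ((f (N+2) j + f (N+3) k₀ - C (N+2) j k₀)/ε)) := by
        have hpt : ∀ (j : Fin (m (N+2))) (k : Fin (m (N+3))),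
            ((g (N+2) j + g (N+3) k - C (N+2) j k)/ε)
            = (((f (N+2) j + f (N+3) k - C (N+2) j k) + if k = k₀ then t else 0)/ε) := by
          intro j k
          rw [hgne (N+2) (by omega), hgl]
          by_cases h : k = k₀ <;> simp [h] <;> ring_nf
        rw [Finset.sum_congr rfl (fun j _ => Finset.sum_congr rfl
          (fun k _ => by rw [hpt j k]))]
        exact pert_sum_col hε' t (fun j k => f (N+2) j + f (N+3) k - C (N+2) j k) k₀
      have e4 : (∑ i ∈ Finset.Icc 1 (N+1), ∑ j, ∑ k,
            Real.exp ((g i j - g (i+1) k - C i j k)/ε))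
          = (∑ i ∈ Finset.Icc 1 (N+1), ∑ j, ∑ k,
              Real.exp ((f i j - f (i+1) k - C i j k)/ε)) := by
        apply Finset.sum_congr rfl
        intro i hi
        have hle : i ≤ N+1 := (Finset.mem_Icc.mp hi).2
        rw [hgne i (by omega), hgne (i+1) (by omega)]
      rw [e1, e2, e3, e4]
      ring
    have hst := stationary_eq hε
      (S1 := ∑ j, Real.exp ((f (N+2) j + f (N+3) k₀ - C (N+2) j k₀)/ε)) (S2 := 0)
      (A := b k₀)
      (fun t => by
        have h := hopt (Function.update f (N+3)
          (fun k => f (N+3) k + if k = k₀ then t else 0))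
        rw [hdual t] at h
        linarith)
    have hSval : (∑ j, Real.exp ((f (N+2) j + f (N+3) k₀ - C (N+2) j k₀)/ε))
        = uhat (N+3) k₀ * ((K (N+2))ᵀ *ᵥ uhat (N+2)) k₀ := by
      rw [mulVec_apply_eq, Finset.mul_sum]
      apply Finset.sum_congr rfl
      intro j _
      have harg : f (N+2) j + f (N+3) k₀ - C (N+2) j k₀
          = ε*Real.log (uhat (N+2) j) + ε*Real.log (uhat (N+3) k₀) - C (N+2) j k₀ := rfl
      rw [harg, exp_conv_add hε (huhat (N+2) (by omega) (by omega) j)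
        (huhat (N+3) (by omega) (by omega) k₀), Matrix.transpose_apply, hK (N+2) j k₀]
      ring
    linarith [hSval, hst]
  have hFPmid : ∀ i : ℕ, 1 ≤ i → i ≤ N → ∀ j₀ : Fin (m (i+1)),
      uhat (i+1) j₀ * (K (i+1) *ᵥ fun k => (uhat (i+2) k)⁻¹) j₀
        = (uhat (i+1) j₀)⁻¹ * ((K i)ᵀ *ᵥ uhat i) j₀ := by
    intro i hile1 hileN j₀
    set f : ∀ i : ℕ, Fin (m i) → ℝ := fun i j => ε * Real.log (uhat i j) with hfdef
    have hdual : ∀ t : ℝ, dualGen N m C a b ε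
        (Function.update f (i+1) (fun j => f (i+1) j + if j = j₀ then t else 0))
        = dualGen N m C a b ε f
          + ((0:ℝ) * t - ε * ((Real.exp (t/ε) - 1)
              * (∑ k, Real.exp ((f (i+1) j₀ - f (i+2) k - C (i+1) j₀ k)/ε))
            + (Real.exp (-t/ε) - 1)
              * (∑ j, Real.exp ((f i j - f (i+1) j₀ - C i j j₀)/ε)))) := by
      intro t
      set g := Function.update f (i+1) (fun j => f (i+1) j + if j = j₀ then t else 0)
        with hgdef
      have hgM : g (i+1) = fun j => f (i+1) j + if j = j₀ then t else 0 :=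
        Function.update_self _ _ _
      have hgne : ∀ i' : ℕ, i' ≠ i+1 → g i' = f i' := fun i' hi =>
        Function.update_of_ne hi _ _
      rw [dualGen, dualGen]
      have e1 : (∑ j, g 1 j * a j) = (∑ j, f 1 j * a j) := by
        rw [hgne 1 (by omega)]
      have e2 : (∑ k, g (N+3) k * b k) = (∑ k, f (N+3) k * b k) := by
        rw [hgne (N+3) (by omega)]
      have e3 : (∑ j, ∑ k, Real.exp ((g (N+2) j + g (N+3) k - C (N+2) j k)/ε))
          = (∑ j, ∑ k, Real.exp ((f (N+2) j + f (N+3) k - C (N+2) j k)/ε)) := by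
        rw [hgne (N+2) (by omega), hgne (N+3) (by omega)]
      have e4 : (∑ i' ∈ Finset.Icc 1 (N+1), ∑ j, ∑ k,
            Real.exp ((g i' j - g (i'+1) k - C i' j k)/ε))
          = (∑ i' ∈ Finset.Icc 1 (N+1), ∑ j, ∑ k,
              Real.exp ((f i' j - f (i'+1) k - C i' j k)/ε))
            + ((Real.exp (t/ε) - 1)
              * (∑ k, Real.exp ((f (i+1) j₀ - f (i+2) k - C (i+1) j₀ k)/ε))
            + (Real.exp (-t/ε) - 1)
              * (∑ j, Real.exp ((f i j - f (i+1) j₀ - C i j j₀)/ε))) := by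
        have hmem1 : (i+1:ℕ) ∈ Finset.Icc 1 (N+1) := by
          simp [Finset.mem_Icc]
          omega
        have hmem2 : i ∈ (Finset.Icc 1 (N+1)).erase (i+1) := by
          rw [Finset.mem_erase]
          constructor
          · omega
          · simp [Finset.mem_Icc]
            omega
        rw [← Finset.add_sum_erase _
          (fun i' => ∑ j, ∑ k, Real.exp ((g i' j - g (i'+1) k - C i' j k)/ε)) hmem1,
          ← Finset.add_sum_erase _
          (fun i' => ∑ j, ∑ k, Real.exp ((g i' j - g (i'+1) k - C i' j k)/ε)) hmem2,
          ← Finset.add_sum_erase _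
          (fun i' => ∑ j, ∑ k, Real.exp ((f i' j - f (i'+1) k - C i' j k)/ε)) hmem1,
          ← Finset.add_sum_erase _
          (fun i' => ∑ j, ∑ k, Real.exp ((f i' j - f (i'+1) k - C i' j k)/ε)) hmem2]
        have erest : (∑ i' ∈ ((Finset.Icc 1 (N+1)).erase (i+1)).erase i,
            ∑ j, ∑ k, Real.exp ((g i' j - g (i'+1) k - C i' j k)/ε))
            = ∑ i' ∈ ((Finset.Icc 1 (N+1)).erase (i+1)).erase i,
              ∑ j, ∑ k, Real.exp ((f i' j - f (i'+1) k - C i' j k)/ε) := by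
          apply Finset.sum_congr rfl
          intro i' hi'
          have h1 : i' ≠ i := Finset.ne_of_mem_erase hi'
          have h2 : i' ≠ i+1 := Finset.ne_of_mem_erase (Finset.mem_of_mem_erase hi')
          rw [hgne i' h2, hgne (i'+1) (by omega)]
        have erow : (∑ j, ∑ k, Real.exp ((g (i+1) j - g (i+1+1) k - C (i+1) j k)/ε))
            = (∑ j, ∑ k, Real.exp ((f (i+1) j - f (i+1+1) k - C (i+1) j k)/ε))
              + (Real.exp (t/ε) - 1)
                * (∑ k, Real.exp ((f (i+1) j₀ - f (i+2) k - C (i+1) j₀ k)/ε)) := by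
          have hpt : ∀ (j : Fin (m (i+1))) (k : Fin (m (i+2))),
              ((g (i+1) j - g (i+2) k - C (i+1) j k)/ε)
              = (((f (i+1) j - f (i+2) k - C (i+1) j k) + if j = j₀ then t else 0)/ε) := by
            intro j k
            rw [hgne (i+2) (by omega), hgM]
            ring_nf
          rw [Finset.sum_congr rfl (fun j _ => Finset.sum_congr rfl
            (fun k _ => by rw [hpt j k]))]
          exact pert_sum_row hε' t (fun j k => f (i+1) j - f (i+2) k - C (i+1) j k) j₀
        have ecol : (∑ j, ∑ k, Real.exp ((g i j - g (i+1) k - C i j k)/ε))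
            = (∑ j, ∑ k, Real.exp ((f i j - f (i+1) k - C i j k)/ε))
              + (Real.exp (-t/ε) - 1)
                * (∑ j, Real.exp ((f i j - f (i+1) j₀ - C i j j₀)/ε)) := by
          have hpt : ∀ (j : Fin (m i)) (k : Fin (m (i+1))),
              ((g i j - g (i+1) k - C i j k)/ε)
              = (((f i j - f (i+1) k - C i j k) + if k = j₀ then -t else 0)/ε) := by
            intro j k
            rw [hgne i (by omega), hgM]
            by_cases h : k = j₀ <;> simp [h] <;> ring_nf
          rw [Finset.sum_congr rfl (fun j _ => Finset.sum_congr rfl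
            (fun k _ => by rw [hpt j k]))]
          exact pert_sum_col hε' (-t) (fun j k => f i j - f (i+1) k - C i j k) j₀
        rw [erest, erow, ecol]
        ring
      rw [e1, e2, e3, e4]
      ring
    have hst := stationary_eq hε
      (S1 := ∑ k, Real.exp ((f (i+1) j₀ - f (i+2) k - C (i+1) j₀ k)/ε))
      (S2 := ∑ j, Real.exp ((f i j - f (i+1) j₀ - C i j j₀)/ε))
      (A := (0:ℝ))
      (fun t => by
        have h := hopt (Function.update f (i+1)
          (fun j => f (i+1) j + if j = j₀ then t else 0))
        rw [hdual t] at h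
        linarith)
    have hS1val : (∑ k, Real.exp ((f (i+1) j₀ - f (i+2) k - C (i+1) j₀ k)/ε))
        = uhat (i+1) j₀ * (K (i+1) *ᵥ fun k => (uhat (i+2) k)⁻¹) j₀ := by
      rw [mulVec_apply_eq, Finset.mul_sum]
      apply Finset.sum_congr rfl
      intro k _
      have harg : f (i+1) j₀ - f (i+2) k - C (i+1) j₀ k
          = ε*Real.log (uhat (i+1) j₀) - ε*Real.log (uhat (i+2) k) - C (i+1) j₀ k := rfl
      rw [harg, exp_conv_sub hε (huhat (i+1) (by omega) (by omega) j₀)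
        (huhat (i+2) (by omega) (by omega) k), hK (i+1) j₀ k]
      ring
    have hS2val : (∑ j, Real.exp ((f i j - f (i+1) j₀ - C i j j₀)/ε))
        = (uhat (i+1) j₀)⁻¹ * ((K i)ᵀ *ᵥ uhat i) j₀ := by
      rw [mulVec_apply_eq, Finset.mul_sum]
      apply Finset.sum_congr rfl
      intro j _
      have harg : f i j - f (i+1) j₀ - C i j j₀
          = ε*Real.log (uhat i j) - ε*Real.log (uhat (i+1) j₀) - C i j j₀ := rfl
      rw [harg, exp_conv_sub hε (huhat i (by omega) (by omega) j)
        (huhat (i+1) (by omega) (by omega) j₀), Matrix.transpose_apply, hK i j j₀]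
      ring
    linarith [hst, hS1val, hS2val]
  have hFPM : ∀ j₀ : Fin (m (N+2)),
      uhat (N+2) j₀ * (K (N+2) *ᵥ uhat (N+3)) j₀
        = (uhat (N+2) j₀)⁻¹ * ((K (N+1))ᵀ *ᵥ uhat (N+1)) j₀ := by
    intro j₀
    set f : ∀ i : ℕ, Fin (m i) → ℝ := fun i j => ε * Real.log (uhat i j) with hfdef
    have hdual : ∀ t : ℝ, dualGen N m C a b ε
        (Function.update f (N+2) (fun j => f (N+2) j + if j = j₀ then t else 0))
        = dualGen N m C a b ε f
          + ((0:ℝ) * t - ε * ((Real.exp (t/ε) - 1)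
              * (∑ k, Real.exp ((f (N+2) j₀ + f (N+3) k - C (N+2) j₀ k)/ε))
            + (Real.exp (-t/ε) - 1)
              * (∑ j, Real.exp ((f (N+1) j - f (N+2) j₀ - C (N+1) j j₀)/ε)))) := by
      intro t
      set g := Function.update f (N+2) (fun j => f (N+2) j + if j = j₀ then t else 0)
        with hgdef
      have hgM : g (N+2) = fun j => f (N+2) j + if j = j₀ then t else 0 :=
        Function.update_self _ _ _
      have hgne : ∀ i : ℕ, i ≠ N+2 → g i = f i := fun i hi => Function.update_of_ne hi _ _
      rw [dualGen, dualGen]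
      have e1 : (∑ j, g 1 j * a j) = (∑ j, f 1 j * a j) := by
        rw [hgne 1 (by omega)]
      have e2 : (∑ k, g (N+3) k * b k) = (∑ k, f (N+3) k * b k) := by
        rw [hgne (N+3) (by omega)]
      have e3 : (∑ j, ∑ k, Real.exp ((g (N+2) j + g (N+3) k - C (N+2) j k)/ε))
          = (∑ j, ∑ k, Real.exp ((f (N+2) j + f (N+3) k - C (N+2) j k)/ε))
            + (Real.exp (t/ε) - 1)
              * (∑ k, Real.exp ((f (N+2) j₀ + f (N+3) k - C (N+2) j₀ k)/ε)) := by
        have hpt : ∀ (j : Fin (m (N+2))) (k : Fin (m (N+3))),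
            ((g (N+2) j + g (N+3) k - C (N+2) j k)/ε)
            = (((f (N+2) j + f (N+3) k - C (N+2) j k) + if j = j₀ then t else 0)/ε) := by
          intro j k
          rw [hgne (N+3) (by omega), hgM]
          ring_nf
        rw [Finset.sum_congr rfl (fun j _ => Finset.sum_congr rfl
          (fun k _ => by rw [hpt j k]))]
        exact pert_sum_row hε' t (fun j k => f (N+2) j + f (N+3) k - C (N+2) j k) j₀
      have e4 : (∑ i ∈ Finset.Icc 1 (N+1), ∑ j, ∑ k,
            Real.exp ((g i j - g (i+1) k - C i j k)/ε))
          = (∑ i ∈ Finset.Icc 1 (N+1), ∑ j, ∑ k,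
              Real.exp ((f i j - f (i+1) k - C i j k)/ε))
            + (Real.exp (-t/ε) - 1)
              * (∑ j, Real.exp ((f (N+1) j - f (N+2) j₀ - C (N+1) j j₀)/ε)) := by
        have hmem : (N+1:ℕ) ∈ Finset.Icc 1 (N+1) := by simp
        rw [← Finset.add_sum_erase _
          (fun i => ∑ j, ∑ k, Real.exp ((g i j - g (i+1) k - C i j k)/ε)) hmem,
          ← Finset.add_sum_erase _
          (fun i => ∑ j, ∑ k, Real.exp ((f i j - f (i+1) k - C i j k)/ε)) hmem]
        have erest : (∑ i ∈ (Finset.Icc 1 (N+1)).erase (N+1),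
            ∑ j, ∑ k, Real.exp ((g i j - g (i+1) k - C i j k)/ε))
            = ∑ i ∈ (Finset.Icc 1 (N+1)).erase (N+1),
              ∑ j, ∑ k, Real.exp ((f i j - f (i+1) k - C i j k)/ε) := by
          apply Finset.sum_congr rfl
          intro i hi
          have hi1 : i ≠ N+1 := Finset.ne_of_mem_erase hi
          have hile : i ≤ N+1 := (Finset.mem_Icc.mp (Finset.mem_of_mem_erase hi)).2
          rw [hgne i (by omega), hgne (i+1) (by omega)]
        have elast : (∑ j, ∑ k, Real.exp ((g (N+1) j - g (N+1+1) k - C (N+1) j k)/ε))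
            = (∑ j, ∑ k, Real.exp ((f (N+1) j - f (N+1+1) k - C (N+1) j k)/ε))
              + (Real.exp (-t/ε) - 1)
                * (∑ j, Real.exp ((f (N+1) j - f (N+2) j₀ - C (N+1) j j₀)/ε)) := by
          have hpt : ∀ (j : Fin (m (N+1))) (k : Fin (m (N+2))),
              ((g (N+1) j - g (N+2) k - C (N+1) j k)/ε)
              = (((f (N+1) j - f (N+2) k - C (N+1) j k) + if k = j₀ then -t else 0)/ε) := by
            intro j k
            rw [hgne (N+1) (by omega), hgM]
            by_cases h : k = j₀ <;> simp [h] <;> ring_nf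
          rw [Finset.sum_congr rfl (fun j _ => Finset.sum_congr rfl
            (fun k _ => by rw [hpt j k]))]
          exact pert_sum_col hε' (-t) (fun j k => f (N+1) j - f (N+2) k - C (N+1) j k) j₀
        rw [erest, elast]
        ring
      rw [e1, e2, e3, e4]
      ring
    have hst := stationary_eq hε
      (S1 := ∑ k, Real.exp ((f (N+2) j₀ + f (N+3) k - C (N+2) j₀ k)/ε))
      (S2 := ∑ j, Real.exp ((f (N+1) j - f (N+2) j₀ - C (N+1) j j₀)/ε))
      (A := (0:ℝ))
      (fun t => by
        have h := hopt (Function.update f (N+2)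
          (fun j => f (N+2) j + if j = j₀ then t else 0))
        rw [hdual t] at h
        linarith)
    have hS1val : (∑ k, Real.exp ((f (N+2) j₀ + f (N+3) k - C (N+2) j₀ k)/ε))
        = uhat (N+2) j₀ * (K (N+2) *ᵥ uhat (N+3)) j₀ := by
      rw [mulVec_apply_eq, Finset.mul_sum]
      apply Finset.sum_congr rfl
      intro k _
      have harg : f (N+2) j₀ + f (N+3) k - C (N+2) j₀ k
          = ε*Real.log (uhat (N+2) j₀) + ε*Real.log (uhat (N+3) k) - C (N+2) j₀ k := rfl
      rw [harg, exp_conv_add hε (huhat (N+2) (by omega) (by omega) j₀)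
        (huhat (N+3) (by omega) (by omega) k), hK (N+2) j₀ k]
      ring
    have hS2val : (∑ j, Real.exp ((f (N+1) j - f (N+2) j₀ - C (N+1) j j₀)/ε))
        = (uhat (N+2) j₀)⁻¹ * ((K (N+1))ᵀ *ᵥ uhat (N+1)) j₀ := by
      rw [mulVec_apply_eq, Finset.mul_sum]
      apply Finset.sum_congr rfl
      intro j _
      have harg : f (N+1) j - f (N+2) j₀ - C (N+1) j j₀
          = ε*Real.log (uhat (N+1) j) - ε*Real.log (uhat (N+2) j₀) - C (N+1) j j₀ := rfl
      rw [harg, exp_conv_sub hε (huhat (N+1) (by omega) (by omega) j)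
        (huhat (N+2) (by omega) (by omega) j₀), Matrix.transpose_apply, hK (N+1) j j₀]
      ring
    linarith [hst, hS1val, hS2val]
  -- square-root forms of the fixed point equations
  have hFPmid' : ∀ i : ℕ, 1 ≤ i → i ≤ N →
      uhat (i+1) = fun j => Real.sqrt (((K i)ᵀ *ᵥ uhat i) j /
        (K (i+1) *ᵥ fun k => (uhat (i+2) k)⁻¹) j) := by
    intro i h1 h2
    funext j
    have heq := hFPmid i h1 h2 j
    have hupos : 0 < uhat (i+1) j := huhat (i+1) (by omega) (by omega) j
    have hDpos : 0 < (K (i+1) *ᵥ fun k => (uhat (i+2) k)⁻¹) j :=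
      mulVec_pos (hm (i+2)) (hKpos (i+1)) (fun k => inv_pos.mpr (huhat (i+2) (by omega) (by omega) k)) j
    have hNpos : 0 < ((K i)ᵀ *ᵥ uhat i) j :=
      mulVec_pos (hm i) (fun k l => hKpos i l k) (huhat i (by omega) (by omega)) j
    rw [show ((K i)ᵀ *ᵥ uhat i) j / (K (i+1) *ᵥ fun k => (uhat (i+2) k)⁻¹) j
        = (uhat (i+1) j)^2 by
      rw [div_eq_iff (ne_of_gt hDpos)]
      have h3 : uhat (i+1) j * (uhat (i+1) j)⁻¹ = 1 := mul_inv_cancel₀ (ne_of_gt hupos)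
      linear_combination (-(uhat (i+1) j)) * heq - (((K i)ᵀ *ᵥ uhat i) j) * h3]
    rw [Real.sqrt_sq (le_of_lt hupos)]
  have hFPM' : uhat (N+2) = fun j => Real.sqrt (((K (N+1))ᵀ *ᵥ uhat (N+1)) j /
      (K (N+2) *ᵥ uhat (N+3)) j) := by
    funext j
    have heq := hFPM j
    have hupos : 0 < uhat (N+2) j := huhat (N+2) (by omega) (by omega) j
    have hDpos : 0 < (K (N+2) *ᵥ uhat (N+3)) j :=
      mulVec_pos (hm (N+3)) (hKpos (N+2)) (huhat (N+3) (by omega) (by omega)) j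
    have hNpos : 0 < ((K (N+1))ᵀ *ᵥ uhat (N+1)) j :=
      mulVec_pos (hm (N+1)) (fun k l => hKpos (N+1) l k) (huhat (N+1) (by omega) (by omega)) j
    rw [show ((K (N+1))ᵀ *ᵥ uhat (N+1)) j / (K (N+2) *ᵥ uhat (N+3)) j
        = (uhat (N+2) j)^2 by
      rw [div_eq_iff (ne_of_gt hDpos)]
      have h3 : uhat (N+2) j * (uhat (N+2) j)⁻¹ = 1 := mul_inv_cancel₀ (ne_of_gt hupos)
      linear_combination (-(uhat (N+2) j)) * heq - (((K (N+1))ᵀ *ᵥ uhat (N+1)) j) * h3]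
    rw [Real.sqrt_sq (le_of_lt hupos)]
  have hFP1' : uhat 1 = fun j => a j / (K 1 *ᵥ fun k => (uhat 2 k)⁻¹) j := by
    funext j
    have heq := hFP1 j
    have hDpos : 0 < (K 1 *ᵥ fun k => (uhat 2 k)⁻¹) j :=
      mulVec_pos (hm 2) (hKpos 1) (fun k => inv_pos.mpr (huhat 2 (by omega) (by omega) k)) j
    rw [eq_div_iff (ne_of_gt hDpos)]
    exact heq
  have hFPlast' : uhat (N+3) = fun k => b k / ((K (N+2))ᵀ *ᵥ uhat (N+2)) k := by
    funext k
    have heq := hFPlast k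
    have hDpos : 0 < ((K (N+2))ᵀ *ᵥ uhat (N+2)) k :=
      mulVec_pos (hm (N+2)) (fun x y => hKpos (N+2) y x) (huhat (N+2) (by omega) (by omega)) k
    rw [eq_div_iff (ne_of_gt hDpos)]
    exact heq
  -- positivity of the iterates
  have hiterpos : ∀ n : ℕ, ∀ i : ℕ, 1 ≤ i → i ≤ N + 3 → ∀ j, 0 < u n i j := by
    intro n
    induction n with
    | zero => exact hu0
    | succ n IH =>
      have hmid : ∀ i' : ℕ, 1 ≤ i' → i' ≤ N → ∀ j, 0 < u (n+1) (i'+1) j := by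
        intro i' h1 h2 j
        rw [hrecMid n i' h1 h2]
        apply Real.sqrt_pos.mpr
        apply div_pos
        · exact mulVec_pos (hm i') (fun k l => hKpos i' l k) (IH i' (by omega) (by omega)) j
        · exact mulVec_pos (hm (i'+2)) (hKpos (i'+1))
            (fun k => inv_pos.mpr (IH (i'+2) (by omega) (by omega) k)) j
      have hM2 : ∀ j, 0 < u (n+1) (N+2) j := by
        intro j
        rw [hrecM n]
        apply Real.sqrt_pos.mpr
        apply div_pos
        · exact mulVec_pos (hm (N+1)) (fun k l => hKpos (N+1) l k)
            (IH (N+1) (by omega) (by omega)) j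
        · exact mulVec_pos (hm (N+3)) (hKpos (N+2)) (IH (N+3) (by omega) (by omega)) j
      have h2pos : ∀ j, 0 < u (n+1) 2 j := by
        rcases Nat.eq_zero_or_pos N with h0 | hNpos
        · subst h0
          exact hM2
        · exact hmid 1 le_rfl hNpos
      have h1pos : ∀ j, 0 < u (n+1) 1 j := by
        intro j
        rw [hrecFirst n]
        exact div_pos (ha j) (mulVec_pos (hm 2) (hKpos 1)
          (fun k => inv_pos.mpr (h2pos k)) j)
      have hlastpos : ∀ j, 0 < u (n+1) (N+3) j := by
        intro j
        rw [hrecLast n]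
        exact div_pos (hb j) (mulVec_pos (hm (N+2)) (fun x y => hKpos (N+2) y x) hM2 j)
      intro i hi1 hi3
      rcases Nat.lt_or_ge i 2 with h | h
      · have : i = 1 := by omega
        subst this
        exact h1pos
      rcases Nat.lt_or_ge i (N+2) with h' | h'
      · obtain ⟨i', rfl⟩ : ∃ i', i = i'+1 := ⟨i-1, by omega⟩
        exact hmid i' (by omega) (by omega)
      rcases Nat.lt_or_ge i (N+3) with h'' | h''
      · have : i = N+2 := by omega
        subst this
        exact hM2
      · have : i = N+3 := by omega
        subst this
        exact hlastpos
  -- basic constants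
  have hEnn : 0 ≤ E := by
    rw [hE]
    have h1 : (1:ℕ) ∈ Finset.Icc 1 (N+2) := by simp
    exact le_trans (birkhoffLambda_nonneg (hm 1) (hm 2) (K 1) (hKpos 1))
      (Finset.le_sup' (fun i => birkhoffLambda (K i)) h1)
  have henn : 0 ≤ e := by
    rw [he]
    have h1 : (1:ℕ) ∈ Finset.Icc 1 (N+3) := by simp
    exact le_trans (dH_nonneg (hm 1) (hu0 1 (by omega) (by omega))
      (huhat 1 (by omega) (by omega)))
      (Finset.le_sup' (fun i => dH (u 0 i) (uhat i)) h1)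
  have hlamE : ∀ i : ℕ, 1 ≤ i → i ≤ N+2 → birkhoffLambda (K i) ≤ E := by
    intro i h1 h2
    rw [hE]
    exact Finset.le_sup' (fun i => birkhoffLambda (K i)) (by simp [Finset.mem_Icc]; omega)
  -- the main induction
  intro n
  induction n with
  | zero =>
    intro i hi1 hi3
    rw [pow_zero, one_mul, he]
    exact Finset.le_sup' (fun i => dH (u 0 i) (uhat i)) (by simp [Finset.mem_Icc]; omega)
  | succ n IH =>
    have hmid : ∀ i' : ℕ, 1 ≤ i' → i' ≤ N →
        dH (u (n+1) (i'+1)) (uhat (i'+1)) ≤ E^(n+1) * e := by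
      intro i' h1 h2
      rw [hrecMid n i' h1 h2, hFPmid' i' h1 h2]
      have hP : ∀ j, 0 < ((K i')ᵀ *ᵥ u n i') j :=
        mulVec_pos (hm i') (fun k l => hKpos i' l k) (hiterpos n i' (by omega) (by omega))
      have hP' : ∀ j, 0 < ((K i')ᵀ *ᵥ uhat i') j :=
        mulVec_pos (hm i') (fun k l => hKpos i' l k) (huhat i' (by omega) (by omega))
      have hQ : ∀ j, 0 < (K (i'+1) *ᵥ fun k => (u n (i'+2) k)⁻¹) j :=
        mulVec_pos (hm (i'+2)) (hKpos (i'+1))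
          (fun k => inv_pos.mpr (hiterpos n (i'+2) (by omega) (by omega) k))
      have hQ' : ∀ j, 0 < (K (i'+1) *ᵥ fun k => (uhat (i'+2) k)⁻¹) j :=
        mulVec_pos (hm (i'+2)) (hKpos (i'+1))
          (fun k => inv_pos.mpr (huhat (i'+2) (by omega) (by omega) k))
      refine le_trans (dH_sqrt_le (hm (i'+1)) hP hP' hQ hQ') ?_
      have hPb : dH ((K i')ᵀ *ᵥ u n i') ((K i')ᵀ *ᵥ uhat i') ≤ E * (E^n * e) := by
        refine le_trans (birkhoff_contraction (hm (i'+1)) (hm i') (K i')ᵀ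
          (fun k l => hKpos i' l k) _ _ (hiterpos n i' (by omega) (by omega))
          (huhat i' (by omega) (by omega))) ?_
        rw [birkhoffLambda_transpose (hm i') (hm (i'+1)) (K i') (hKpos i')]
        apply mul_le_mul (hlamE i' (by omega) (by omega)) (IH i' (by omega) (by omega))
          (dH_nonneg (hm i') (hiterpos n i' (by omega) (by omega))
            (huhat i' (by omega) (by omega))) hEnn
      have hQb : dH (K (i'+1) *ᵥ fun k => (u n (i'+2) k)⁻¹)
          (K (i'+1) *ᵥ fun k => (uhat (i'+2) k)⁻¹) ≤ E * (E^n * e) := by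
        refine le_trans (birkhoff_contraction (hm (i'+1)) (hm (i'+2)) (K (i'+1))
          (hKpos (i'+1)) _ _
          (fun k => inv_pos.mpr (hiterpos n (i'+2) (by omega) (by omega) k))
          (fun k => inv_pos.mpr (huhat (i'+2) (by omega) (by omega) k))) ?_
        rw [dH_inv (hiterpos n (i'+2) (by omega) (by omega))
          (huhat (i'+2) (by omega) (by omega))]
        apply mul_le_mul (hlamE (i'+1) (by omega) (by omega))
          (IH (i'+2) (by omega) (by omega))
          (dH_nonneg (hm (i'+2)) (hiterpos n (i'+2) (by omega) (by omega))
            (huhat (i'+2) (by omega) (by omega))) hEnn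
      rw [pow_succ]
      calc (dH ((K i')ᵀ *ᵥ u n i') ((K i')ᵀ *ᵥ uhat i')
            + dH (K (i'+1) *ᵥ fun k => (u n (i'+2) k)⁻¹)
              (K (i'+1) *ᵥ fun k => (uhat (i'+2) k)⁻¹)) / 2
          ≤ (E * (E^n * e) + E * (E^n * e)) / 2 := by linarith
        _ = E^n * E * e := by ring
    have hMstep : dH (u (n+1) (N+2)) (uhat (N+2)) ≤ E^(n+1) * e := by
      rw [hrecM n, hFPM']
      have hP : ∀ j, 0 < ((K (N+1))ᵀ *ᵥ u n (N+1)) j :=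
        mulVec_pos (hm (N+1)) (fun k l => hKpos (N+1) l k)
          (hiterpos n (N+1) (by omega) (by omega))
      have hP' : ∀ j, 0 < ((K (N+1))ᵀ *ᵥ uhat (N+1)) j :=
        mulVec_pos (hm (N+1)) (fun k l => hKpos (N+1) l k) (huhat (N+1) (by omega) (by omega))
      have hQ : ∀ j, 0 < (K (N+2) *ᵥ u n (N+3)) j :=
        mulVec_pos (hm (N+3)) (hKpos (N+2)) (hiterpos n (N+3) (by omega) (by omega))
      have hQ' : ∀ j, 0 < (K (N+2) *ᵥ uhat (N+3)) j :=
        mulVec_pos (hm (N+3)) (hKpos (N+2)) (huhat (N+3) (by omega) (by omega))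
      refine le_trans (dH_sqrt_le (hm (N+2)) hP hP' hQ hQ') ?_
      have hPb : dH ((K (N+1))ᵀ *ᵥ u n (N+1)) ((K (N+1))ᵀ *ᵥ uhat (N+1)) ≤ E * (E^n * e) := by
        refine le_trans (birkhoff_contraction (hm (N+2)) (hm (N+1)) (K (N+1))ᵀ
          (fun k l => hKpos (N+1) l k) _ _ (hiterpos n (N+1) (by omega) (by omega))
          (huhat (N+1) (by omega) (by omega))) ?_
        rw [birkhoffLambda_transpose (hm (N+1)) (hm (N+2)) (K (N+1)) (hKpos (N+1))]
        apply mul_le_mul (hlamE (N+1) (by omega) (by omega)) (IH (N+1) (by omega) (by omega))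
          (dH_nonneg (hm (N+1)) (hiterpos n (N+1) (by omega) (by omega))
            (huhat (N+1) (by omega) (by omega))) hEnn
      have hQb : dH (K (N+2) *ᵥ u n (N+3)) (K (N+2) *ᵥ uhat (N+3)) ≤ E * (E^n * e) := by
        refine le_trans (birkhoff_contraction (hm (N+2)) (hm (N+3)) (K (N+2))
          (hKpos (N+2)) _ _ (hiterpos n (N+3) (by omega) (by omega))
          (huhat (N+3) (by omega) (by omega))) ?_
        apply mul_le_mul (hlamE (N+2) (by omega) (by omega)) (IH (N+3) (by omega) (by omega))
          (dH_nonneg (hm (N+3)) (hiterpos n (N+3) (by omega) (by omega))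
            (huhat (N+3) (by omega) (by omega))) hEnn
      rw [pow_succ]
      calc (dH ((K (N+1))ᵀ *ᵥ u n (N+1)) ((K (N+1))ᵀ *ᵥ uhat (N+1))
            + dH (K (N+2) *ᵥ u n (N+3)) (K (N+2) *ᵥ uhat (N+3))) / 2
          ≤ (E * (E^n * e) + E * (E^n * e)) / 2 := by linarith
        _ = E^n * E * e := by ring
    have h2step : dH (u (n+1) 2) (uhat 2) ≤ E^(n+1) * e := by
      rcases Nat.eq_zero_or_pos N with h0 | hNpos
      · subst h0
        exact hMstep
      · exact hmid 1 le_rfl hNpos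
    have h1step : dH (u (n+1) 1) (uhat 1) ≤ E^(n+1) * e := by
      rw [hrecFirst n, hFP1']
      have h2p : ∀ j, 0 < u (n+1) 2 j := hiterpos (n+1) 2 (by omega) (by omega)
      have h2p' : ∀ j, 0 < uhat 2 j := huhat 2 (by omega) (by omega)
      have hQ : ∀ j, 0 < (K 1 *ᵥ fun k => (u (n+1) 2 k)⁻¹) j :=
        mulVec_pos (hm 2) (hKpos 1) (fun k => inv_pos.mpr (h2p k))
      have hQ' : ∀ j, 0 < (K 1 *ᵥ fun k => (uhat 2 k)⁻¹) j :=
        mulVec_pos (hm 2) (hKpos 1) (fun k => inv_pos.mpr (h2p' k))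
      rw [dH_div_left ha hQ hQ']
      refine le_trans (birkhoff_contraction (hm 1) (hm 2) (K 1) (hKpos 1) _ _
        (fun k => inv_pos.mpr (h2p k)) (fun k => inv_pos.mpr (h2p' k))) ?_
      rw [dH_inv h2p h2p']
      calc birkhoffLambda (K 1) * dH (u (n+1) 2) (uhat 2)
          ≤ 1 * dH (u (n+1) 2) (uhat 2) :=
            mul_le_mul_of_nonneg_right (birkhoffLambda_le_one (K 1))
              (dH_nonneg (hm 2) h2p h2p')
        _ = dH (u (n+1) 2) (uhat 2) := one_mul _
        _ ≤ E^(n+1) * e := h2step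
    have hlaststep : dH (u (n+1) (N+3)) (uhat (N+3)) ≤ E^(n+1) * e := by
      rw [hrecLast n, hFPlast']
      have hMp : ∀ j, 0 < u (n+1) (N+2) j := hiterpos (n+1) (N+2) (by omega) (by omega)
      have hMp' : ∀ j, 0 < uhat (N+2) j := huhat (N+2) (by omega) (by omega)
      have hQ : ∀ j, 0 < ((K (N+2))ᵀ *ᵥ u (n+1) (N+2)) j :=
        mulVec_pos (hm (N+2)) (fun x y => hKpos (N+2) y x) hMp
      have hQ' : ∀ j, 0 < ((K (N+2))ᵀ *ᵥ uhat (N+2)) j :=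
        mulVec_pos (hm (N+2)) (fun x y => hKpos (N+2) y x) hMp'
      rw [dH_div_left hb hQ hQ']
      refine le_trans (birkhoff_contraction (hm (N+3)) (hm (N+2)) (K (N+2))ᵀ
        (fun x y => hKpos (N+2) y x) _ _ hMp hMp') ?_
      calc birkhoffLambda (K (N+2))ᵀ * dH (u (n+1) (N+2)) (uhat (N+2))
          ≤ 1 * dH (u (n+1) (N+2)) (uhat (N+2)) :=
            mul_le_mul_of_nonneg_right (birkhoffLambda_le_one _)
              (dH_nonneg (hm (N+2)) hMp hMp')
        _ = dH (u (n+1) (N+2)) (uhat (N+2)) := one_mul _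
        _ ≤ E^(n+1) * e := hMstep
    intro i hi1 hi3
    rcases Nat.lt_or_ge i 2 with h | h
    · have : i = 1 := by omega
      subst this
      exact h1step
    rcases Nat.lt_or_ge i (N+2) with h' | h'
    · obtain ⟨i', rfl⟩ : ∃ i', i = i'+1 := ⟨i-1, by omega⟩
      exact hmid i' (by omega) (by omega)
    rcases Nat.lt_or_ge i (N+3) with h'' | h''
    · have : i = N+2 := by omega
      subst this
      exact hMstep
    · have : i = N+3 := by omega
      subst this
      exact hlaststep
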